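/- arXiv:1311.2618 — 4 statements merged into one kernel-verified Lean document; each statement's English description precedes it below -/
import Mathlib

section
/- For any simple graph G and any subset X of its vertices, the cut-rank function satisfies the submodular inequality: cutrk_G(X) + cutrk_G(Y) ≥ cutrk_G(X ∩ Y) + cutrk_G(X ∪ Y) for all X, Y ⊆ V(G). -/
set_option maxHeartbeats 1000000
set_option synthInstance.maxHeartbeats 400000
set_option linter.unusedSectionVars false


/-- The cut-rank of `X`: the rank over GF(2) of the adjacency submatrix
`A(G)[X, V \\ X]`. -/
noncomputable def cutRank {V : Type} [Fintype V] [DecidableEq V]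
    (G : SimpleGraph V) (X : Finset V) : ℕ := by
  classical
  exact Matrix.rank (Matrix.of fun (i : X) (j : (Xᶜ : Finset V)) =>
    if G.Adj (i : V) (j : V) then (1 : ZMod 2) else 0)

namespace CutRankAux

open Submodule Module Matrix
open scoped Classical

variable {V : Type} [Fintype V] [DecidableEq V] (G : SimpleGraph V)

/-- The adjacency matrix over `ZMod 2`. -/
noncomputable def adjM : Matrix V V (ZMod 2) :=
  Matrix.of fun i j => if G.Adj i j then (1 : ZMod 2) else 0

/-- The set of standard basis vectors indexed by `S`. -/
def singleSet (S : Finset V) : Set (V → ZMod 2) :=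
  (fun j => Pi.single j (1 : ZMod 2)) '' (↑S : Set V)

/-- Span of the columns of `adjM` indexed by `S` together with the standard
basis vectors indexed by `S`. -/
noncomputable def FF (S : Finset V) : Submodule (ZMod 2) (V → ZMod 2) :=
  span (ZMod 2) ((adjM G)ᵀ '' (↑S : Set V)) ⊔ span (ZMod 2) (singleSet S)

lemma FF_union (S T : Finset V) : FF G (S ∪ T) = FF G S ⊔ FF G T := by
  simp only [FF, singleSet, Finset.coe_union, Set.image_union, span_union]
  rw [show (adjM G)ᵀ '' (↑S ∪ ↑T : Set V) = (adjM G)ᵀ '' ↑S ∪ (adjM G)ᵀ '' ↑T from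
    Set.image_union _ _ _, span_union]
  exact sup_sup_sup_comm _ _ _ _

lemma FF_mono {S T : Finset V} (h : S ⊆ T) : FF G S ≤ FF G T := by
  apply sup_le_sup <;>
    exact span_mono (Set.image_mono (by exact_mod_cast h))

/-- The restriction map to coordinates in `X`. -/
noncomputable def projX (X : Finset V) : (V → ZMod 2) →ₗ[ZMod 2] (↥X → ZMod 2) :=
  LinearMap.funLeft (ZMod 2) (ZMod 2) (fun i : ↥X => (i : V))

lemma ker_projX (X : Finset V) :
    LinearMap.ker (projX (V := V) X) = span (ZMod 2) (singleSet Xᶜ) := by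
  apply le_antisymm
  · intro f hf
    have hf' : ∀ i ∈ X, f i = 0 := by
      intro i hi
      have := congrFun (LinearMap.mem_ker.mp hf) (⟨i, hi⟩ : ↥X)
      simpa [projX, LinearMap.funLeft] using this
    have hsum : f = ∑ j : V, Pi.single j (f j) := (Finset.univ_sum_single f).symm
    rw [hsum]
    refine sum_mem fun j _ => ?_
    by_cases hj : j ∈ X
    · simp [hf' j hj]
    · have h1 : Pi.single j (f j) = f j • (Pi.single j (1 : ZMod 2) : V → ZMod 2) := by
        ext k
        by_cases hk : k = j <;> simp [hk, Pi.single_apply]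
      rw [h1]
      exact smul_mem _ _ (subset_span ⟨j, by simpa using hj, rfl⟩)
  · rw [span_le]
    rintro _ ⟨j, hj, rfl⟩
    have hj' : j ∉ X := by simpa using hj
    simp only [SetLike.mem_coe, LinearMap.mem_ker]
    ext i
    have hij : (i : V) ≠ j := fun h => hj' (h ▸ i.2)
    simp [projX, LinearMap.funLeft, Pi.single_apply, hij]

lemma finrank_span_single (S : Finset V) :
    finrank (ZMod 2) (span (ZMod 2) (singleSet S)) = S.card := by
  have hli : LinearIndependent (ZMod 2)
      (fun j : ↥S => (Pi.single (j : V) (1 : ZMod 2) : V → ZMod 2)) := by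
    have := (Pi.basisFun (ZMod 2) V).linearIndependent.comp
      (fun j : ↥S => (j : V)) Subtype.val_injective
    simpa [Function.comp_def] using this
  have hr : Set.range (fun j : ↥S => (Pi.single (j : V) (1 : ZMod 2) : V → ZMod 2)) =
      (fun j => Pi.single j (1 : ZMod 2)) '' (↑S : Set V) := by
    ext x; constructor
    · rintro ⟨j, rfl⟩; exact ⟨j, j.2, rfl⟩
    · rintro ⟨j, hj, rfl⟩; exact ⟨⟨j, hj⟩, rfl⟩
  show finrank (ZMod 2)
      (span (ZMod 2) ((fun j => Pi.single j (1 : ZMod 2)) '' (↑S : Set V))) = S.card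
  rw [← hr, finrank_span_eq_card hli, Fintype.card_coe]

lemma ker_le_FF (X : Finset V) :
    LinearMap.ker (projX (V := V) X) ≤ FF G Xᶜ := by
  rw [ker_projX]; exact le_sup_right

/-- The key formula: `finrank (FF Xᶜ) = cutRank X + |Xᶜ|`. -/
lemma finrank_FF_compl (X : Finset V) :
    finrank (ZMod 2) (FF G Xᶜ) = cutRank G X + Xᶜ.card := by
  classical
  set π := projX (V := V) X with hπ
  set W := FF G Xᶜ with hW
  have hker : LinearMap.ker π ≤ W := ker_le_FF G X
  have hrn := LinearMap.finrank_range_add_finrank_ker (π.domRestrict W)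
  -- identify the kernel
  have hkerW : LinearMap.ker (π.domRestrict W) = comap W.subtype (LinearMap.ker π) :=
    LinearMap.ker_domRestrict W π
  have hkerdim : finrank (ZMod 2) (LinearMap.ker (π.domRestrict W)) = Xᶜ.card := by
    rw [hkerW, (Submodule.comapSubtypeEquivOfLe hker).finrank_eq,
      show LinearMap.ker π = _ from ker_projX X]
    exact finrank_span_single _
  -- identify the range
  have hmapker : Submodule.map π (LinearMap.ker π) = ⊥ := by
    rw [eq_bot_iff]
    rintro _ ⟨x, hx, rfl⟩
    simpa using hx
  have hrange : LinearMap.range (π.domRestrict W) =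
      Submodule.map π (span (ZMod 2) ((adjM G)ᵀ '' (↑(Xᶜ) : Set V))) := by
    rw [LinearMap.range_domRestrict, hW]
    show Submodule.map π (FF G Xᶜ) = _
    rw [FF, Submodule.map_sup, ← ker_projX X, hπ]
    show Submodule.map π _ ⊔ Submodule.map π (LinearMap.ker π) = _
    rw [hmapker, sup_bot_eq]
  -- the mapped column span is the column span of the cut matrix
  have hcut : cutRank G X =
      finrank (ZMod 2) (Submodule.map π (span (ZMod 2) ((adjM G)ᵀ '' (↑(Xᶜ) : Set V)))) := by
    have hMeq : (Matrix.of fun (i : X) (j : (Xᶜ : Finset V)) =>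
        if G.Adj (i : V) (j : V) then (1 : ZMod 2) else 0) =
        (adjM G).submatrix (fun i : ↥X => (i : V)) (fun j : ↥(Xᶜ) => (j : V)) := by
      ext i j
      by_cases h : G.Adj (i : V) (j : V) <;> simp [adjM, h]
    have h2 : cutRank G X = Matrix.rank ((adjM G).submatrix
        (fun i : ↥X => (i : V)) (fun j : ↥(Xᶜ) => (j : V))) := by
      unfold cutRank
      congr 1
    rw [h2, Matrix.rank_eq_finrank_span_cols, Submodule.map_span]
    have hsets : Set.range ((adjM G).submatrix (fun i : ↥X => (i : V))
        (fun j : ↥(Xᶜ) => (j : V)))ᵀ = ⇑π '' ((adjM G)ᵀ '' (↑(Xᶜ) : Set V)) := by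
      ext x
      constructor
      · rintro ⟨j, rfl⟩
        exact ⟨(adjM G)ᵀ (j : V), ⟨(j : V), j.2, rfl⟩, rfl⟩
      · rintro ⟨_, ⟨j, hj, rfl⟩, rfl⟩
        exact ⟨⟨j, hj⟩, rfl⟩
    exact congrArg (fun s => finrank (ZMod 2) (span (ZMod 2) s)) hsets
  rw [← hrn, hkerdim, hrange, hcut]

lemma finrank_FF_submodular (S T : Finset V) :
    finrank (ZMod 2) (FF G (S ∩ T)) + finrank (ZMod 2) (FF G (S ∪ T)) ≤
      finrank (ZMod 2) (FF G S) + finrank (ZMod 2) (FF G T) := by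
  have h1 : FF G (S ∩ T) ≤ FF G S ⊓ FF G T :=
    le_inf (FF_mono G Finset.inter_subset_left) (FF_mono G Finset.inter_subset_right)
  have h2 : FF G (S ∪ T) = FF G S ⊔ FF G T := FF_union G S T
  have h3 := Submodule.finrank_sup_add_finrank_inf_eq (FF G S) (FF G T)
  have hle : finrank (ZMod 2) (FF G (S ∩ T)) ≤
      finrank (ZMod 2) (FF G S ⊓ FF G T : Submodule _ _) :=
    Submodule.finrank_mono h1
  rw [h2]
  omega

end CutRankAux

theorem cutRank_submodular {V : Type} [Fintype V] [DecidableEq V]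
    (G : SimpleGraph V) (X Y : Finset V) :
    cutRank G (X ∩ Y) + cutRank G (X ∪ Y) ≤ cutRank G X + cutRank G Y := by
  classical
  have hX := CutRankAux.finrank_FF_compl G X
  have hY := CutRankAux.finrank_FF_compl G Y
  have hI := CutRankAux.finrank_FF_compl G (X ∩ Y)
  have hU := CutRankAux.finrank_FF_compl G (X ∪ Y)
  rw [Finset.compl_inter] at hI
  rw [Finset.compl_union] at hU
  have hsub := CutRankAux.finrank_FF_submodular G Xᶜ Yᶜ
  rw [hX, hY, hU, hI] at hsub
  have hcard : (Xᶜ ∩ Yᶜ).card + (Xᶜ ∪ Yᶜ).card = Xᶜ.card + Yᶜ.card := by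
    rw [add_comm]
    exact Finset.card_union_add_card_inter Xᶜ Yᶜ
  omega
end

section
/- Local complementation preserves cut-rank: for any simple graph G, any vertex v of G, and any subset X of vertices, cutrk_G(X) = cutrk_{G*v}(X). -/
/-- Local complementation at a vertex `v`. -/
def localComp {V : Type} (G : SimpleGraph V) (v : V) : SimpleGraph V where
  Adj x y := x ≠ y ∧ Xor' (G.Adj x y) (G.Adj v x ∧ G.Adj v y)
  symm := by
    constructor
    rintro x y ⟨hne, h⟩
    exact ⟨hne.symm, by rwa [G.adj_comm y x, and_comm]⟩
  loopless := by constructor; rintro x ⟨hne, -⟩; exact hne rfl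

open Matrix in
theorem cutRank_localComp {V : Type} [Fintype V] [DecidableEq V]
    (G : SimpleGraph V) (v : V) (X : Finset V) :
    cutRank G X = cutRank (localComp G v) X := by
  classical
  unfold cutRank
  set M : Matrix X (Xᶜ : Finset V) (ZMod 2) :=
    Matrix.of fun i j => if G.Adj (i : V) (j : V) then (1 : ZMod 2) else 0 with hM
  set M' : Matrix X (Xᶜ : Finset V) (ZMod 2) :=
    Matrix.of fun i j => if (localComp G v).Adj (i : V) (j : V) then (1 : ZMod 2) else 0 with hM'
  have entry : ∀ (i : X) (j : (Xᶜ : Finset V)),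
      M' i j = M i j + (if G.Adj v i then (1 : ZMod 2) else 0) *
        (if G.Adj v j then (1 : ZMod 2) else 0) := by
    intro i j
    have hne : (i : V) ≠ (j : V) := by
      intro h
      have := j.2
      rw [← h] at this
      exact (Finset.mem_compl.mp this) i.2
    simp only [hM, hM', Matrix.of_apply, localComp]
    by_cases ha : G.Adj (i : V) (j : V) <;>
      by_cases hb : G.Adj v i <;> by_cases hc : G.Adj v j <;>
      simp [Xor', ha, hb, hc, hne] <;> decide
  by_cases hv : v ∈ X
  · -- v ∈ X : M' = E * M with E = 1 + N, N i j = [G.Adj v i] * [j = v']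
    set v' : X := ⟨v, hv⟩ with hv'
    set N : Matrix X X (ZMod 2) :=
      Matrix.of fun i j => (if G.Adj v i then (1 : ZMod 2) else 0) *
        (if j = v' then (1 : ZMod 2) else 0) with hN
    have hNN : N * N = 0 := by
      ext i j
      simp only [Matrix.mul_apply, hN, Matrix.of_apply, Matrix.zero_apply]
      apply Finset.sum_eq_zero
      intro k _
      by_cases hk : k = v'
      · subst hk
        simp [hv', G.irrefl]
      · simp [hk]
    have hE : (1 + N) * (1 + N) = 1 := by
      have h2 : N + N = 0 := by
        ext i j; simp [CharTwo.add_self_eq_zero]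
      have expand : (1 + N) * (1 + N) = 1 + (N + N) + N * N := by noncomm_ring
      rw [expand, h2, hNN, add_zero, add_zero]
    have hdet : IsUnit (1 + N).det :=
      (Matrix.isUnit_iff_isUnit_det _).mp ⟨⟨1 + N, 1 + N, hE, hE⟩, rfl⟩
    have hfac : M' = (1 + N) * M := by
      rw [Matrix.add_mul, Matrix.one_mul]
      ext i j
      rw [Matrix.add_apply, Matrix.mul_apply, entry i j]
      congr 1
      have key : ∀ k : X, N i k * M k j =
          if k = v' then (if G.Adj v (i : V) then (1:ZMod 2) else 0) * M v' j else 0 := by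
        intro k
        by_cases hk : k = v' <;> simp [hN, hk]
      rw [Finset.sum_congr rfl (fun k _ => key k), Finset.sum_ite_eq' Finset.univ v']
      have hMv : M v' j = (if G.Adj v (j : V) then (1 : ZMod 2) else 0) := by
        simp [hM, hv']
      simp [hMv]
    rw [hfac, Matrix.rank_mul_eq_right_of_isUnit_det _ _ hdet]
  · -- v ∈ Xᶜ : M' = M * E with E = 1 + N, N j k = [j = v'] * [G.Adj v k]
    have hvc : v ∈ (Xᶜ : Finset V) := Finset.mem_compl.mpr hv
    set v' : (Xᶜ : Finset V) := ⟨v, hvc⟩ with hv'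
    set N : Matrix (Xᶜ : Finset V) (Xᶜ : Finset V) (ZMod 2) :=
      Matrix.of fun j k => (if j = v' then (1 : ZMod 2) else 0) *
        (if G.Adj v k then (1 : ZMod 2) else 0) with hN
    have hNN : N * N = 0 := by
      ext i j
      simp only [Matrix.mul_apply, hN, Matrix.of_apply, Matrix.zero_apply]
      apply Finset.sum_eq_zero
      intro k _
      by_cases hk : k = v'
      · subst hk
        simp [hv', G.irrefl]
      · simp [hk]
    have hE : (1 + N) * (1 + N) = 1 := by
      have h2 : N + N = 0 := by
        ext i j; simp [CharTwo.add_self_eq_zero]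
      have expand : (1 + N) * (1 + N) = 1 + (N + N) + N * N := by noncomm_ring
      rw [expand, h2, hNN, add_zero, add_zero]
    have hdet : IsUnit (1 + N).det :=
      (Matrix.isUnit_iff_isUnit_det _).mp ⟨⟨1 + N, 1 + N, hE, hE⟩, rfl⟩
    have hfac : M' = M * (1 + N) := by
      rw [Matrix.mul_add, Matrix.mul_one]
      ext i j
      rw [Matrix.add_apply, Matrix.mul_apply, entry i j]
      congr 1
      have key : ∀ k : (Xᶜ : Finset V), M i k * N k j =
          if k = v' then M i v' * (if G.Adj v (j : V) then (1:ZMod 2) else 0) else 0 := by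
        intro k
        by_cases hk : k = v' <;> simp [hN, hk, mul_comm, mul_assoc, mul_left_comm]
      rw [Finset.sum_congr rfl (fun k _ => key k), Finset.sum_ite_eq' Finset.univ v']
      have hMv : M i v' = (if G.Adj v (i : V) then (1 : ZMod 2) else 0) := by
        simp [hM, hv', G.adj_comm]
      simp [hMv]
    rw [hfac, Matrix.rank_mul_eq_left_of_isUnit_det _ _ hdet]
end

section
/- Every graph in Δ_k has linear rank-width at least k+1, where Δ_0 consists of the single graph K_2 and Δ_k is the set of all delta compositions of three graphs in Δ_{k-1}. -/
/-- A linear layout is an ordering of all vertices. -/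
def IsLinearLayout {V : Type} (l : List V) : Prop := l.Nodup ∧ ∀ v : V, v ∈ l

/-- The width of a linear layout: the maximum cut-rank of an initial segment. -/
noncomputable def layoutWidth {V : Type} [Fintype V] [DecidableEq V]
    (G : SimpleGraph V) (l : List V) : ℕ :=
  (Finset.range l.length).sup fun i => cutRank G (l.take (i+1)).toFinset

/-- The linear rank-width of a graph. -/
noncomputable def linRankWidth {V : Type} [Fintype V] [DecidableEq V]
    (G : SimpleGraph V) : ℕ :=
  sInf {k | ∃ l : List V, IsLinearLayout l ∧ layoutWidth G l = k}

/-- The delta composition of three graphs: disjoint union plus a triangle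
`v₁v₂v₃` with one vertex in each part. -/
def deltaComp {V₁ V₂ V₃ : Type} (G₁ : SimpleGraph V₁) (G₂ : SimpleGraph V₂)
    (G₃ : SimpleGraph V₃) (v₁ : V₁) (v₂ : V₂) (v₃ : V₃) :
    SimpleGraph (V₁ ⊕ V₂ ⊕ V₃) where
  Adj x y := match x, y with
    | .inl a, .inl b => G₁.Adj a b
    | .inr (.inl a), .inr (.inl b) => G₂.Adj a b
    | .inr (.inr a), .inr (.inr b) => G₃.Adj a b
    | .inl a, .inr (.inl b) => a = v₁ ∧ b = v₂
    | .inr (.inl a), .inl b => a = v₂ ∧ b = v₁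
    | .inl a, .inr (.inr b) => a = v₁ ∧ b = v₃
    | .inr (.inr a), .inl b => a = v₃ ∧ b = v₁
    | .inr (.inl a), .inr (.inr b) => a = v₂ ∧ b = v₃
    | .inr (.inr a), .inr (.inl b) => a = v₃ ∧ b = v₂
  symm := by
    constructor
    rintro (a|a|a) (b|b|b) h
    · exact G₁.adj_symm h
    · exact ⟨h.2, h.1⟩
    · exact ⟨h.2, h.1⟩
    · exact ⟨h.2, h.1⟩
    · exact G₂.adj_symm h
    · exact ⟨h.2, h.1⟩
    · exact ⟨h.2, h.1⟩
    · exact ⟨h.2, h.1⟩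
    · exact G₃.adj_symm h
  loopless := by constructor; rintro (a|a|a) h <;> exact (SimpleGraph.irrefl _) h

/-- `InDelta k G` means `G` belongs to the class `Δ_k` (up to isomorphism):
`Δ_0 = {K₂}` and `Δ_k` is the set of delta compositions of three graphs in
`Δ_{k-1}`. -/
inductive InDelta : ℕ → {V : Type} → SimpleGraph V → Prop
  | base {V : Type} (G : SimpleGraph V)
      (e : Nonempty (G ≃g (⊤ : SimpleGraph (Fin 2)))) : InDelta 0 G
  | comp {k : ℕ} {V₁ V₂ V₃ V : Type} {G₁ : SimpleGraph V₁} {G₂ : SimpleGraph V₂}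
      {G₃ : SimpleGraph V₃} (G : SimpleGraph V) (v₁ : V₁) (v₂ : V₂) (v₃ : V₃)
      (h₁ : InDelta k G₁) (h₂ : InDelta k G₂) (h₃ : InDelta k G₃)
      (e : Nonempty (G ≃g deltaComp G₁ G₂ G₃ v₁ v₂ v₃)) : InDelta (k+1) G



/-! ### Auxiliary rank lemmas -/

section RankLemmas

open Matrix

variable {F : Type*} [Field F]

theorem rank_submatrix_le' {m n m' n' : Type*} [Fintype n] [Fintype n'] [Fintype m'] [Fintype m]
    (A : Matrix m n F) (f : m' → m) (g : n' → n) :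
    (A.submatrix f g).rank ≤ A.rank := by
  classical
  rw [Matrix.rank_eq_finrank_span_cols, Matrix.rank_eq_finrank_span_cols]
  have hcol : ∀ j : n', (A.submatrix f g)ᵀ j = (LinearMap.funLeft F F f) (Aᵀ (g j)) := by
    intro j; rfl
  have hsub : Submodule.span F (Set.range (A.submatrix f g)ᵀ) ≤
      Submodule.map (LinearMap.funLeft F F f) (Submodule.span F (Set.range Aᵀ)) := by
    rw [← Submodule.span_image]
    apply Submodule.span_mono
    rintro _ ⟨j, rfl⟩
    exact ⟨Aᵀ (g j), Set.mem_range_self (g j), (hcol j).symm⟩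
  exact le_trans (Submodule.finrank_mono hsub) (Submodule.finrank_map_le _ _)

theorem rank_reindex'' {m n m' n' : Type*} [Fintype n] [Fintype n'] [Fintype m'] [Fintype m]
    (A : Matrix m n F) (e₁ : m' ≃ m) (e₂ : n' ≃ n) :
    (A.submatrix e₁ e₂).rank = A.rank := by
  refine le_antisymm (rank_submatrix_le' A e₁ e₂) ?_
  have h := rank_submatrix_le' (A.submatrix e₁ e₂) e₁.symm e₂.symm
  rwa [Matrix.submatrix_submatrix, Equiv.self_comp_symm, Equiv.self_comp_symm,
    Matrix.submatrix_id_id] at h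

/-- Extend-by-zero linear map for option types. -/
def extZero (F : Type*) [Field F] (m : Type*) : (m → F) →ₗ[F] (Option m → F) where
  toFun x := fun o => Option.rec 0 x o
  map_add' x y := by funext o; cases o <;> simp
  map_smul' c x := by funext o; cases o <;> simp

theorem extZero_injective {m : Type*} : Function.Injective (extZero F m) := by
  intro x y h
  funext i
  exact congrFun h (some i)

theorem rank_border {m n : Type*} [Fintype m] [Fintype n] (N : Matrix (Option m) (Option n) F)
    (h1 : N none none = 1) (h0 : ∀ j, N none (some j) = 0) :
    (N.submatrix some some).rank + 1 ≤ N.rank := by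
  classical
  set B := N.submatrix some some with hB
  set φ := extZero F m with hφ
  set W := Submodule.map φ (Submodule.span F (Set.range Bᵀ)) with hW
  set v : Option m → F := Nᵀ none with hv
  have hWzero : ∀ w ∈ W, w none = 0 := by
    rintro _ ⟨x, _, rfl⟩
    rfl
  have hvnotW : v ∉ W := by
    intro hmem
    have := hWzero v hmem
    rw [show v none = 1 from h1] at this
    exact one_ne_zero this
  have hvne : v ≠ 0 := by
    intro h
    apply hvnotW
    rw [h]; exact Submodule.zero_mem W
  set L := Submodule.span F ({v} : Set (Option m → F)) with hL
  have hinf : W ⊓ L = ⊥ := by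
    rw [Submodule.eq_bot_iff]
    rintro x ⟨hxW, hxL⟩
    obtain ⟨c, rfl⟩ := Submodule.mem_span_singleton.mp hxL
    rcases eq_or_ne c 0 with rfl | hc
    · simp
    · exact absurd (by simpa [hc] using (Submodule.smul_mem_iff W hc).mp hxW) hvnotW
  have hfinL : Module.finrank F L = 1 := finrank_span_singleton hvne
  have hfinW : Module.finrank F W = B.rank := by
    rw [Matrix.rank_eq_finrank_span_cols]
    exact (LinearEquiv.finrank_eq (Submodule.equivMapOfInjective φ extZero_injective _)).symm
  have hsup : W ⊔ L ≤ Submodule.span F (Set.range Nᵀ) := by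
    apply sup_le
    · rw [hW, ← Submodule.span_image]
      apply Submodule.span_mono
      rintro _ ⟨_, ⟨j, rfl⟩, rfl⟩
      refine ⟨some j, ?_⟩
      funext o
      cases o with
      | none => exact h0 j
      | some i => rfl
    · rw [hL, Submodule.span_le, Set.singleton_subset_iff]
      exact Submodule.subset_span (Set.mem_range_self none)
  have hdim : Module.finrank F (W ⊔ L : Submodule F (Option m → F)) = B.rank + 1 := by
    have := Submodule.finrank_sup_add_finrank_inf_eq W L
    rw [hinf] at this
    simp only [finrank_bot, add_zero] at this
    rw [this, hfinW, hfinL]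
  calc B.rank + 1 = Module.finrank F (W ⊔ L : Submodule F (Option m → F)) := hdim.symm
    _ ≤ Module.finrank F (Submodule.span F (Set.range Nᵀ)) := Submodule.finrank_mono hsup
    _ = N.rank := (Matrix.rank_eq_finrank_span_cols N).symm

theorem rank_border' {m n : Type*} [Fintype m] [Fintype n] (N : Matrix (Option m) (Option n) F)
    (h1 : N none none = 1) (h0 : ∀ i, N (some i) none = 0) :
    (N.submatrix some some).rank + 1 ≤ N.rank := by
  have h := rank_border Nᵀ h1 (fun i => h0 i)
  rwa [show Nᵀ.submatrix some some = (N.submatrix some some)ᵀ from rfl,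
    Matrix.rank_transpose, Matrix.rank_transpose] at h

end RankLemmas

/-! ### The cut matrix -/

open scoped Classical in
/-- The adjacency matrix between two vertex subsets. -/
noncomputable def cutMx {W : Type} (H : SimpleGraph W) (S T : Finset W) :
    Matrix ↥S ↥T (ZMod 2) :=
  Matrix.of fun i j => if H.Adj (i : W) (j : W) then 1 else 0

theorem cutRank_eq {W : Type} [Fintype W] [DecidableEq W] (H : SimpleGraph W) (X : Finset W) :
    cutRank H X = (cutMx H X Xᶜ).rank := by
  unfold cutRank cutMx
  congr 1

theorem cutMx_nonempty_of_rank {W : Type} (H : SimpleGraph W) (S T : Finset W)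
    (h : 1 ≤ (cutMx H S T).rank) : S.Nonempty ∧ T.Nonempty := by
  constructor
  · rw [← Finset.card_pos]
    calc 0 < (cutMx H S T).rank := h
      _ ≤ Fintype.card ↥S := Matrix.rank_le_card_height _
      _ = S.card := Fintype.card_coe S
  · rw [← Finset.card_pos]
    calc 0 < (cutMx H S T).rank := h
      _ ≤ Fintype.card ↥T := Matrix.rank_le_card_width _
      _ = T.card := Fintype.card_coe T

theorem cutMx_rank_congr {U W : Type} [Fintype U] [Fintype W]
    (G : SimpleGraph U) (H : SimpleGraph W) (f : U → W) (hf : Function.Injective f)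
    (hAdj : ∀ a b, G.Adj a b ↔ H.Adj (f a) (f b))
    (S T : Finset U) (S' T' : Finset W)
    (hS : ∀ w, w ∈ S' ↔ ∃ u ∈ S, f u = w) (hT : ∀ w, w ∈ T' ↔ ∃ u ∈ T, f u = w) :
    (cutMx G S T).rank = (cutMx H S' T').rank := by
  let e₁ : ↥S ≃ ↥S' := Equiv.ofBijective (fun u => ⟨f u, (hS _).mpr ⟨u, u.2, rfl⟩⟩)
    ⟨fun a b h => Subtype.ext (hf (congrArg Subtype.val h)),
     fun w => by
      obtain ⟨u, hu, hw⟩ := (hS w.1).mp w.2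
      exact ⟨⟨u, hu⟩, Subtype.ext hw⟩⟩
  let e₂ : ↥T ≃ ↥T' := Equiv.ofBijective (fun u => ⟨f u, (hT _).mpr ⟨u, u.2, rfl⟩⟩)
    ⟨fun a b h => Subtype.ext (hf (congrArg Subtype.val h)),
     fun w => by
      obtain ⟨u, hu, hw⟩ := (hT w.1).mp w.2
      exact ⟨⟨u, hu⟩, Subtype.ext hw⟩⟩
  have hEq : cutMx G S T = (cutMx H S' T').submatrix e₁ e₂ := by
    funext i j
    simp only [cutMx, Matrix.of_apply, Matrix.submatrix_apply]
    by_cases hab : G.Adj (i : U) (j : U)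
    · rw [if_pos hab, if_pos (show H.Adj ((e₁ i : ↥S') : W) ((e₂ j : ↥T') : W) from
        (hAdj _ _).mp hab)]
    · rw [if_neg hab, if_neg (show ¬ H.Adj ((e₁ i : ↥S') : W) ((e₂ j : ↥T') : W) from
        fun hh => hab ((hAdj _ _).mpr hh))]
  rw [hEq, rank_reindex'']

theorem one_le_cutRank {W : Type} [Fintype W] [DecidableEq W] (H : SimpleGraph W)
    (X : Finset W) (r c : W) (hr : r ∈ X) (hc : c ∉ X) (h : H.Adj r c) :
    1 ≤ cutRank H X := by
  rw [cutRank_eq]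
  have h1 : ((cutMx H X Xᶜ).submatrix (fun _ : Unit => (⟨r, hr⟩ : ↥X))
      (fun _ : Unit => (⟨c, Finset.mem_compl.mpr hc⟩ : ↥(Xᶜ)))) = (1 : Matrix Unit Unit (ZMod 2)) := by
    funext i j
    simp [cutMx, Matrix.one_apply, h]
  have h2 := rank_submatrix_le' (cutMx H X Xᶜ) (fun _ : Unit => (⟨r, hr⟩ : ↥X))
      (fun _ : Unit => (⟨c, Finset.mem_compl.mpr hc⟩ : ↥(Xᶜ)))
  rw [h1, Matrix.rank_one] at h2
  simpa using h2

theorem cutRank_step {W : Type} [Fintype W] [DecidableEq W] (H : SimpleGraph W)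
    (P : Finset W) (v0 : W)
    (hcross : ∀ a b, H.Adj a b → a ∈ P → b ∉ P → a = v0)
    (X : Finset W) (K : ℕ)
    (hrk : K ≤ (cutMx H (X ∩ P) (P \ X)).rank)
    (r c : W) (hr : r ∈ X) (hrP : r ∉ P) (hc : c ∉ X) (hcP : c ∉ P) (hadj : H.Adj r c) :
    K + 1 ≤ cutRank H X := by
  rw [cutRank_eq]
  set f : Option ↥(X ∩ P) → ↥X :=
    fun o => Option.rec ⟨r, hr⟩ (fun a => ⟨a.1, (Finset.mem_inter.mp a.2).1⟩) o with hf
  set g : Option ↥(P \ X) → ↥(Xᶜ) :=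
    fun o => Option.rec ⟨c, Finset.mem_compl.mpr hc⟩
      (fun b => ⟨b.1, Finset.mem_compl.mpr (Finset.mem_sdiff.mp b.2).2⟩) o with hg
  set N := (cutMx H X Xᶜ).submatrix f g with hN
  have hsub : N.submatrix some some = cutMx H (X ∩ P) (P \ X) := by
    funext i j
    simp only [hN, hf, hg, cutMx, Matrix.of_apply, Matrix.submatrix_apply]
  have h1 : N none none = 1 := by
    simp only [hN, hf, hg, cutMx, Matrix.of_apply, Matrix.submatrix_apply]
    exact if_pos hadj
  have hNle : N.rank ≤ (cutMx H X Xᶜ).rank := rank_submatrix_le' _ f g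
  have hK : K + 1 ≤ N.rank := by
    by_cases hv : v0 ∈ X
    · have h0 : ∀ j, N none (some j) = 0 := by
        intro j
        simp only [hN, hf, hg, cutMx, Matrix.of_apply, Matrix.submatrix_apply]
        rw [if_neg]
        intro hadj'
        have hjv : (j : W) = v0 :=
          hcross (j : W) r (H.adj_symm hadj') (Finset.mem_sdiff.mp j.2).1 hrP
        exact (Finset.mem_sdiff.mp j.2).2 (hjv ▸ hv)
      calc K + 1 ≤ (N.submatrix some some).rank + 1 := by rw [hsub]; omega
        _ ≤ N.rank := rank_border N h1 h0
    · have h0 : ∀ i, N (some i) none = 0 := by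
        intro i
        simp only [hN, hf, hg, cutMx, Matrix.of_apply, Matrix.submatrix_apply]
        rw [if_neg]
        intro hadj'
        have hiv : (i : W) = v0 :=
          hcross (i : W) c hadj' (Finset.mem_inter.mp i.2).2 hcP
        exact hv (hiv ▸ (Finset.mem_inter.mp i.2).1)
      calc K + 1 ≤ (N.submatrix some some).rank + 1 := by rw [hsub]; omega
        _ ≤ N.rank := rank_border' N h1 h0
  exact hK.trans hNle

/-! ### Layout lemmas -/

theorem pref_mono {W : Type} [DecidableEq W] (l : List W) {s t : ℕ} (h : s ≤ t) :
    (l.take s).toFinset ⊆ (l.take t).toFinset := by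
  intro w hw
  rw [List.mem_toFinset] at *
  have hst : l.take s = (l.take t).take s := by rw [List.take_take, min_eq_left h]
  rw [hst] at hw
  exact List.take_subset _ _ hw

theorem filterMap_take_exists {α β : Type*} (g : α → Option β) (l : List α) (m : ℕ) :
    ∃ t ≤ l.length, (l.take t).filterMap g = (l.filterMap g).take m := by
  induction l generalizing m with
  | nil => exact ⟨0, le_refl 0, by simp⟩
  | cons a l ih =>
    cases hga : g a with
    | none =>
      obtain ⟨t, ht, heq⟩ := ih m
      exact ⟨t + 1, by simpa using ht, by simp [List.filterMap_cons, hga, heq]⟩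
    | some u =>
      cases m with
      | zero => exact ⟨0, by simp, by simp⟩
      | succ m =>
        obtain ⟨t, ht, heq⟩ := ih m
        exact ⟨t + 1, by simpa using ht, by simp [List.filterMap_cons, hga, heq]⟩

/-- Restriction of a list along an injection. -/
noncomputable def restrictList {U W : Type} (f : U → W) (l : List W) : List U :=
  l.filterMap (Function.partialInv f)

theorem mem_restrictList {U W : Type} {f : U → W} (hf : Function.Injective f)
    (l : List W) (u : U) : u ∈ restrictList f l ↔ f u ∈ l := by
  simp only [restrictList, List.mem_filterMap]
  constructor
  · rintro ⟨w, hw, hww⟩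
    have : f u = w := (Function.partialInv_of_injective hf u w).mp hww
    rwa [this]
  · intro hfu
    exact ⟨f u, hfu, Function.partialInv_left hf u⟩

theorem restrictList_isLayout {U W : Type} {f : U → W} (hf : Function.Injective f)
    (l : List W) (hl : IsLinearLayout l) : IsLinearLayout (restrictList f l) := by
  constructor
  · refine List.Nodup.filterMap ?_ hl.1
    intro w w' u hw hw'
    have h1 : f u = w := (Function.partialInv_of_injective hf u w).mp hw
    have h2 : f u = w' := (Function.partialInv_of_injective hf u w').mp hw'
    rw [← h1, ← h2]
  · intro u
    exact (mem_restrictList hf l u).mpr (hl.2 (f u))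

/-! ### The core combinatorial lemma -/

theorem core_lemma {W : Type} [Fintype W] [DecidableEq W] (H : SimpleGraph W)
    (P : Fin 3 → Finset W) (v : Fin 3 → W) (K : ℕ) (hK : 1 ≤ K)
    (hvP : ∀ i, v i ∈ P i)
    (hPdisj : ∀ i j, i ≠ j → ∀ w, w ∈ P i → w ∉ P j)
    (hvadj : ∀ i j, i ≠ j → H.Adj (v i) (v j))
    (hcross : ∀ i a b, H.Adj a b → a ∈ P i → b ∉ P i → a = v i)
    (hconn : ∀ i (X : Finset W), (X ∩ P i).Nonempty → (P i \ X).Nonempty →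
      ∃ a b, H.Adj a b ∧ a ∈ X ∧ a ∈ P i ∧ b ∉ X ∧ b ∈ P i)
    (l : List W) (hl : IsLinearLayout l)
    (hrk : ∀ i, ∃ t ≤ l.length,
      K ≤ (cutMx H ((l.take t).toFinset ∩ P i) (P i \ (l.take t).toFinset)).rank) :
    K + 1 ≤ layoutWidth H l := by
  classical
  set X : ℕ → Finset W := fun t => (l.take t).toFinset with hX
  set Bad : Fin 3 → ℕ → Prop := fun i t => K ≤ (cutMx H (X t ∩ P i) (P i \ X t)).rank with hBad
  by_contra hcon
  push_neg at hcon
  have hwid : ∀ t, 1 ≤ t → t ≤ l.length → cutRank H (X t) ≤ K := by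
    intro t h1 h2
    have hmem : t - 1 ∈ Finset.range l.length := Finset.mem_range.mpr (by omega)
    have hle := Finset.le_sup (f := fun i => cutRank H ((l.take (i + 1)).toFinset)) hmem
    rw [show t - 1 + 1 = t from by omega] at hle
    have h3 : layoutWidth H l ≤ K := by omega
    unfold layoutWidth at h3
    exact le_trans hle h3
  have hsplit : ∀ i t, Bad i t → (X t ∩ P i).Nonempty ∧ (P i \ X t).Nonempty := by
    intro i t hb
    exact cutMx_nonempty_of_rank H _ _ (le_trans hK hb)
  have hno : ∀ i t, t ≤ l.length → Bad i t → ∀ r c, r ∈ X t → c ∉ X t → r ∉ P i → c ∉ P i →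
      ¬ H.Adj r c := by
    intro i t htn hbad r c hr hc hrP hcP hadj
    have h1t : 1 ≤ t := by
      by_contra h
      push_neg at h
      have ht0 : t = 0 := by omega
      obtain ⟨x, hx⟩ := (hsplit i t hbad).1
      rw [ht0] at hx
      simp [hX] at hx
    have hstep := cutRank_step H (P i) (v i) (hcross i) (X t) K hbad r c hr hrP hc hcP hadj
    have := hwid t h1t htn
    omega
  -- Step 1 : the earliest time any part has rank ≥ K
  set T₁ : Set ℕ := {t | t ≤ l.length ∧ ∃ i, Bad i t} with hT₁
  have hT₁ne : T₁.Nonempty := by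
    obtain ⟨t, htn, hb⟩ := hrk 0
    exact ⟨t, htn, 0, hb⟩
  set t₁ := sInf T₁ with ht₁
  obtain ⟨ht₁n, a, hbada⟩ := Nat.sInf_mem hT₁ne
  have hmin₁ : ∀ i t, t ≤ l.length → Bad i t → t₁ ≤ t := fun i t h hb => Nat.sInf_le ⟨h, i, hb⟩
  have hstep1 : ∀ j, j ≠ a → ∀ w, w ∈ P j → w ∉ X t₁ := by
    intro j hj w hwP hwX
    by_cases hsplitj : (P j \ X t₁).Nonempty
    · obtain ⟨r', c', hadj', hr', hrP', hc', hcP'⟩ :=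
        hconn j (X t₁) ⟨w, Finset.mem_inter.mpr ⟨hwX, hwP⟩⟩ hsplitj
      exact hno a t₁ ht₁n hbada r' c' hr' hc' (hPdisj j a hj r' hrP')
        (hPdisj j a hj c' hcP') hadj'
    · obtain ⟨tj, htjn, hbadj⟩ := hrk j
      obtain ⟨y, hy⟩ := (hsplit j tj hbadj).2
      have hyP := (Finset.mem_sdiff.mp hy).1
      have hyX := (Finset.mem_sdiff.mp hy).2
      have hy1 : y ∈ X t₁ := by
        by_contra hy1
        exact hsplitj ⟨y, Finset.mem_sdiff.mpr ⟨hyP, hy1⟩⟩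
      have hle : t₁ ≤ tj := hmin₁ j tj htjn hbadj
      exact hyX (pref_mono l hle hy1)
  -- Step 2 : the earliest time another part has rank ≥ K
  set T₂ : Set ℕ := {t | t ≤ l.length ∧ ∃ j, j ≠ a ∧ Bad j t} with hT₂
  have hT₂ne : T₂.Nonempty := by
    obtain ⟨j₀, hj₀⟩ := exists_ne a
    obtain ⟨t, htn, hb⟩ := hrk j₀
    exact ⟨t, htn, j₀, hj₀, hb⟩
  set t₂ := sInf T₂ with ht₂
  obtain ⟨ht₂n, b, hba, hbadb⟩ := Nat.sInf_mem hT₂ne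
  have hmin₂ : ∀ j t, j ≠ a → t ≤ l.length → Bad j t → t₂ ≤ t :=
    fun j t hj h hb => Nat.sInf_le ⟨h, j, hj, hb⟩
  have h12 : t₁ ≤ t₂ := hmin₁ b t₂ ht₂n hbadb
  -- P a is entirely inside X t₂
  obtain ⟨z, hz⟩ := (hsplit a t₁ hbada).1
  have hzX2 : z ∈ X t₂ := pref_mono l h12 (Finset.mem_inter.mp hz).1
  have hPaX : ∀ w ∈ P a, w ∈ X t₂ := by
    intro w hw
    by_contra hwX
    obtain ⟨r', c', hadj', hr', hrP', hc', hcP'⟩ :=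
      hconn a (X t₂) ⟨z, Finset.mem_inter.mpr ⟨hzX2, (Finset.mem_inter.mp hz).2⟩⟩
        ⟨w, Finset.mem_sdiff.mpr ⟨hw, hwX⟩⟩
    exact hno b t₂ ht₂n hbadb r' c' hr' hc' (hPdisj a b (Ne.symm hba) r' hrP')
      (hPdisj a b (Ne.symm hba) c' hcP') hadj'
  -- the third part
  obtain ⟨c, hca, hcb⟩ : ∃ c : Fin 3, c ≠ a ∧ c ≠ b := by
    fin_cases a <;> fin_cases b <;> decide
  have hvcX : v c ∈ X t₂ := by
    by_contra hvcX
    exact hno b t₂ ht₂n hbadb (v a) (v c) (hPaX (v a) (hvP a)) hvcX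
      (hPdisj a b (Ne.symm hba) (v a) (hvP a)) (hPdisj c b hcb (v c) (hvP c))
      (hvadj a c (Ne.symm hca))
  have hPcX : ∀ w ∈ P c, w ∈ X t₂ := by
    intro w hw
    by_contra hwX
    obtain ⟨r', c', hadj', hr', hrP', hc', hcP'⟩ :=
      hconn c (X t₂) ⟨v c, Finset.mem_inter.mpr ⟨hvcX, hvP c⟩⟩
        ⟨w, Finset.mem_sdiff.mpr ⟨hw, hwX⟩⟩
    exact hno b t₂ ht₂n hbadb r' c' hr' hc' (hPdisj c b hcb r' hrP')
      (hPdisj c b hcb c' hcP') hadj'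
  -- contradiction with minimality of t₂
  obtain ⟨tc, htcn, hbadc⟩ := hrk c
  obtain ⟨y, hy⟩ := (hsplit c tc hbadc).2
  have hyP := (Finset.mem_sdiff.mp hy).1
  have hyX := (Finset.mem_sdiff.mp hy).2
  have hle : t₂ ≤ tc := hmin₂ c tc hca htcn hbadc
  exact hyX (pref_mono l hle (hPcX y hyP))

/-! ### Graph lemmas for delta compositions -/

theorem top_fin2_connected : (⊤ : SimpleGraph (Fin 2)).Connected := by
  rw [SimpleGraph.connected_iff]
  refine ⟨fun u v => ?_, ⟨0⟩⟩
  by_cases h : u = v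
  · rw [h]
  · exact ((SimpleGraph.top_adj u v).mpr h).reachable

theorem deltaComp_connected {V₁ V₂ V₃ : Type} {G₁ : SimpleGraph V₁} {G₂ : SimpleGraph V₂}
    {G₃ : SimpleGraph V₃} (v₁ : V₁) (v₂ : V₂) (v₃ : V₃)
    (h₁ : G₁.Connected) (h₂ : G₂.Connected) (h₃ : G₃.Connected) :
    (deltaComp G₁ G₂ G₃ v₁ v₂ v₃).Connected := by
  set H := deltaComp G₁ G₂ G₃ v₁ v₂ v₃ with hH
  let hom₁ : G₁ →g H := ⟨Sum.inl, fun {a b} hab => hab⟩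
  let hom₂ : G₂ →g H := ⟨fun b => Sum.inr (Sum.inl b), fun {a b} hab => hab⟩
  let hom₃ : G₃ →g H := ⟨fun c => Sum.inr (Sum.inr c), fun {a b} hab => hab⟩
  have key : ∀ w, H.Reachable w (Sum.inl v₁) := by
    intro w
    rcases w with a | b | c
    · exact (h₁.preconnected a v₁).map hom₁
    · have r1 : H.Reachable (Sum.inr (Sum.inl b)) (Sum.inr (Sum.inl v₂)) :=
        (h₂.preconnected b v₂).map hom₂
      have r2 : H.Adj (Sum.inr (Sum.inl v₂)) (Sum.inl v₁) := ⟨rfl, rfl⟩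
      exact r1.trans r2.reachable
    · have r1 : H.Reachable (Sum.inr (Sum.inr c)) (Sum.inr (Sum.inr v₃)) :=
        (h₃.preconnected c v₃).map hom₃
      have r2 : H.Adj (Sum.inr (Sum.inr v₃)) (Sum.inl v₁) := ⟨rfl, rfl⟩
      exact r1.trans r2.reachable
  rw [SimpleGraph.connected_iff]
  exact ⟨fun u w => (key u).trans (key w).symm, ⟨Sum.inl v₁⟩⟩

theorem InDelta_connected : ∀ {k : ℕ} {V : Type} {G : SimpleGraph V},
    InDelta k G → G.Connected := by
  intro k V G h
  induction h with
  | base G e =>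
    obtain ⟨e⟩ := e
    exact e.connected_iff.mpr top_fin2_connected
  | comp G w₁ w₂ w₃ h₁ h₂ h₃ e ih₁ ih₂ ih₃ =>
    obtain ⟨e⟩ := e
    exact e.connected_iff.mpr (deltaComp_connected w₁ w₂ w₃ ih₁ ih₂ ih₃)

theorem part_conn {U W : Type} [DecidableEq W] (G : SimpleGraph U) (H : SimpleGraph W) (f : U → W)
    (hAdjf : ∀ a b, G.Adj a b → H.Adj (f a) (f b))
    (P : Finset W) (hP : ∀ w, w ∈ P ↔ ∃ u, f u = w) (hc : G.Preconnected)
    (X : Finset W) (h1 : (X ∩ P).Nonempty) (h2 : (P \ X).Nonempty) :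
    ∃ a b, H.Adj a b ∧ a ∈ X ∧ a ∈ P ∧ b ∉ X ∧ b ∈ P := by
  obtain ⟨x, hx⟩ := h1
  obtain ⟨y, hy⟩ := h2
  obtain ⟨u, hu⟩ := (hP x).mp (Finset.mem_inter.mp hx).2
  obtain ⟨u', hu'⟩ := (hP y).mp (Finset.mem_sdiff.mp hy).1
  let hom : G →g H := ⟨f, fun {a b} hab => hAdjf a b hab⟩
  obtain ⟨walk⟩ := hc u u'
  set p := walk.map hom with hp
  have hux : f u ∈ (↑X : Set W) := by
    rw [hu]; exact (Finset.mem_inter.mp hx).1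
  have huy : f u' ∉ (↑X : Set W) := by
    rw [hu']; exact fun hmem => (Finset.mem_sdiff.mp hy).2 hmem
  obtain ⟨d, hdp, hd1, hd2⟩ := p.exists_boundary_dart (↑X : Set W) hux huy
  have hmem1 : d.toProd.1 ∈ p.support := SimpleGraph.Walk.dart_fst_mem_support_of_mem_darts p hdp
  have hmem2 : d.toProd.2 ∈ p.support := SimpleGraph.Walk.dart_snd_mem_support_of_mem_darts p hdp
  rw [hp, SimpleGraph.Walk.support_map, List.mem_map] at hmem1 hmem2
  obtain ⟨a₀, _, ha₀⟩ := hmem1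
  obtain ⟨b₀, _, hb₀⟩ := hmem2
  exact ⟨d.toProd.1, d.toProd.2, d.adj, hd1, (hP _).mpr ⟨a₀, ha₀⟩, hd2, (hP _).mpr ⟨b₀, hb₀⟩⟩

/-! ### Restricting a layout to a part -/

theorem part_exists_bad {U W : Type} [Fintype U] [DecidableEq U] [Fintype W] [DecidableEq W]
    (G : SimpleGraph U) (H : SimpleGraph W) (f : U → W) (hf : Function.Injective f)
    (hAdj : ∀ a b, G.Adj a b ↔ H.Adj (f a) (f b))
    (P : Finset W) (hP : ∀ w, w ∈ P ↔ ∃ u, f u = w)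
    (l : List W) (hl : IsLinearLayout l) (K : ℕ) (hK : 1 ≤ K)
    (hlrw : K ≤ linRankWidth G) :
    ∃ t ≤ l.length,
      K ≤ (cutMx H ((l.take t).toFinset ∩ P) (P \ (l.take t).toFinset)).rank := by
  classical
  set l₁ := restrictList f l with hl₁def
  have hl₁ : IsLinearLayout l₁ := restrictList_isLayout hf l hl
  have hw : K ≤ layoutWidth G l₁ :=
    le_trans hlrw (Nat.sInf_le ⟨l₁, hl₁, rfl⟩)
  have hex : ∃ m ∈ Finset.range l₁.length,
      K ≤ cutRank G ((l₁.take (m + 1)).toFinset) := by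
    by_contra hcon
    push_neg at hcon
    have h2 : layoutWidth G l₁ < K :=
      (Finset.sup_lt_iff (show (⊥ : ℕ) < K from hK)).mpr (fun m hm => hcon m hm)
    omega
  obtain ⟨m, _, hKm⟩ := hex
  obtain ⟨t, htn, hteq⟩ := filterMap_take_exists (Function.partialInv f) l (m + 1)
  set Y := (l₁.take (m + 1)).toFinset with hY
  have hYt : ∀ u : U, u ∈ Y ↔ f u ∈ (l.take t).toFinset := by
    intro u
    rw [hY, List.mem_toFinset, List.mem_toFinset, hl₁def]
    simp only [restrictList]
    rw [← hteq]
    exact mem_restrictList hf (l.take t) u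
  refine ⟨t, htn, ?_⟩
  rw [cutRank_eq] at hKm
  refine le_trans hKm (le_of_eq ?_)
  refine cutMx_rank_congr G H f hf hAdj Y Yᶜ _ _ ?_ ?_
  · intro w
    constructor
    · intro hw
      obtain ⟨u, hu⟩ := (hP w).mp (Finset.mem_inter.mp hw).2
      refine ⟨u, ?_, hu⟩
      rw [hYt u, hu]
      exact (Finset.mem_inter.mp hw).1
    · rintro ⟨u, hu, rfl⟩
      exact Finset.mem_inter.mpr ⟨(hYt u).mp hu, (hP (f u)).mpr ⟨u, rfl⟩⟩
  · intro w
    constructor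
    · intro hw
      obtain ⟨u, hu⟩ := (hP w).mp (Finset.mem_sdiff.mp hw).1
      refine ⟨u, ?_, hu⟩
      rw [Finset.mem_compl]
      intro huY
      exact (Finset.mem_sdiff.mp hw).2 (hu ▸ (hYt u).mp huY)
    · rintro ⟨u, hu, rfl⟩
      refine Finset.mem_sdiff.mpr ⟨(hP (f u)).mpr ⟨u, rfl⟩, ?_⟩
      intro hmem
      exact (Finset.mem_compl.mp hu) ((hYt u).mpr hmem)

/-! ### Transport along an isomorphism -/

theorem layout_map_isLayout {V W : Type} (e : V ≃ W) (l : List V) (hl : IsLinearLayout l) :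
    IsLinearLayout (l.map e) := by
  constructor
  · exact hl.1.map e.injective
  · intro w
    rw [List.mem_map]
    exact ⟨e.symm w, hl.2 _, e.apply_symm_apply w⟩

theorem layoutWidth_map {V W : Type} [Fintype V] [DecidableEq V] [Fintype W] [DecidableEq W]
    {G : SimpleGraph V} {H : SimpleGraph W} (e : G ≃g H) (l : List V) :
    layoutWidth H (l.map e) = layoutWidth G l := by
  unfold layoutWidth
  rw [List.length_map]
  apply Finset.sup_congr rfl
  intro i _
  rw [cutRank_eq, cutRank_eq, ← List.map_take]
  set X := (l.take (i + 1)).toFinset with hXdef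
  refine (cutMx_rank_congr G H e e.toEquiv.injective
    (fun a b => (e.map_adj_iff).symm) X Xᶜ _ _ ?_ ?_).symm
  · intro w
    rw [List.mem_toFinset, List.mem_map]
    constructor
    · rintro ⟨u, hu, rfl⟩
      exact ⟨u, List.mem_toFinset.mpr hu, rfl⟩
    · rintro ⟨u, hu, rfl⟩
      exact ⟨u, List.mem_toFinset.mp hu, rfl⟩
  · intro w
    rw [Finset.mem_compl, List.mem_toFinset]
    constructor
    · intro hw
      refine ⟨e.symm w, ?_, e.toEquiv.apply_symm_apply w⟩
      rw [Finset.mem_compl, hXdef, List.mem_toFinset]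
      intro hmem
      exact hw (List.mem_map.mpr ⟨e.symm w, hmem, e.toEquiv.apply_symm_apply w⟩)
    · rintro ⟨u, hu, rfl⟩
      intro hmem
      obtain ⟨u', hu', huu⟩ := List.mem_map.mp hmem
      have : u' = u := e.toEquiv.injective huu
      exact (Finset.mem_compl.mp hu) (hXdef ▸ List.mem_toFinset.mpr (this ▸ hu'))

/-! ### Main theorem -/

theorem main_aux {k : ℕ} {V : Type} {G : SimpleGraph V} (hG : InDelta k G) :
    ∀ [instF : Fintype V] [instD : DecidableEq V], k + 1 ≤ linRankWidth G := by
  induction hG with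
  | base G e0 =>
    intro instF instD
    obtain ⟨e⟩ := e0
    refine le_csInf ⟨_, Finset.univ.toList,
      ⟨Finset.univ.nodup_toList, fun v => Finset.mem_toList.mpr (Finset.mem_univ v)⟩, rfl⟩ ?_
    rintro x ⟨l, hl, rfl⟩
    cases l with
    | nil => exact absurd (hl.2 (e.symm 0)) List.not_mem_nil
    | cons a t =>
      set c := e.symm (e a + 1) with hc
      have hner : e c ≠ e a := by
        rw [hc, RelIso.apply_symm_apply]
        exact (by decide : ∀ x : Fin 2, x + 1 ≠ x) (e a)
      have hcr : c ≠ a := fun h => hner (congrArg e h)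
      have hadj : G.Adj a c := by
        have htop : (⊤ : SimpleGraph (Fin 2)).Adj (e a) (e c) := by
          rw [SimpleGraph.top_adj]
          exact fun h => hner h.symm
        exact e.map_adj_iff.mp htop
      have hX : ((a :: t).take 1).toFinset = {a} := by simp
      have h1 : 1 ≤ cutRank G ((a :: t).take 1).toFinset := by
        apply one_le_cutRank G _ a c ?_ ?_ hadj
        · rw [hX]; exact Finset.mem_singleton_self a
        · rw [hX]; simpa using hcr
      have h0 : 0 ∈ Finset.range (a :: t).length := by simp
      have hle := Finset.le_sup
        (f := fun i => cutRank G (((a :: t).take (i + 1)).toFinset)) h0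
      exact le_trans h1 hle
  | comp G w₁ w₂ w₃ h₁ h₂ h₃ e0 ih₁ ih₂ ih₃ =>
    rename_i k V₁ V₂ V₃ Vt G₁ G₂ G₃
    intro instF instD
    obtain ⟨e⟩ := e0
    haveI instW : Fintype (V₁ ⊕ V₂ ⊕ V₃) := Fintype.ofEquiv _ e.toEquiv
    haveI instWD : DecidableEq (V₁ ⊕ V₂ ⊕ V₃) := e.toEquiv.symm.decidableEq
    have hinj2 : Function.Injective (fun b => (Sum.inr (Sum.inl b) : V₁ ⊕ V₂ ⊕ V₃)) := by
      intro x y hxy; simpa using hxy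
    have hinj3 : Function.Injective (fun b => (Sum.inr (Sum.inr b) : V₁ ⊕ V₂ ⊕ V₃)) := by
      intro x y hxy; simpa using hxy
    haveI iF1 : Fintype V₁ :=
      Fintype.ofInjective (Sum.inl : V₁ → V₁ ⊕ V₂ ⊕ V₃) Sum.inl_injective
    haveI iF2 : Fintype V₂ := Fintype.ofInjective _ hinj2
    haveI iF3 : Fintype V₃ := Fintype.ofInjective _ hinj3
    haveI iD1 : DecidableEq V₁ := Classical.decEq V₁
    haveI iD2 : DecidableEq V₂ := Classical.decEq V₂
    haveI iD3 : DecidableEq V₃ := Classical.decEq V₃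
    set H := deltaComp G₁ G₂ G₃ w₁ w₂ w₃ with hHdef
    set P1 : Finset (V₁ ⊕ V₂ ⊕ V₃) :=
      Finset.univ.map ⟨Sum.inl, Sum.inl_injective⟩ with hP1
    set P2 : Finset (V₁ ⊕ V₂ ⊕ V₃) := Finset.univ.map ⟨_, hinj2⟩ with hP2
    set P3 : Finset (V₁ ⊕ V₂ ⊕ V₃) := Finset.univ.map ⟨_, hinj3⟩ with hP3
    have hm1 : ∀ w, w ∈ P1 ↔ ∃ a, Sum.inl a = w := by
      intro w; simp [hP1]
    have hm2 : ∀ w, w ∈ P2 ↔ ∃ a, Sum.inr (Sum.inl a) = w := by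
      intro w; simp [hP2]
    have hm3 : ∀ w, w ∈ P3 ↔ ∃ a, Sum.inr (Sum.inr a) = w := by
      intro w; simp [hP3]
    have hne12 : ∀ w, w ∈ P1 → w ∈ P2 → False := by
      intro w hw1 hw2
      obtain ⟨a, rfl⟩ := (hm1 w).mp hw1
      obtain ⟨b, hb⟩ := (hm2 _).mp hw2
      simp at hb
    have hne13 : ∀ w, w ∈ P1 → w ∈ P3 → False := by
      intro w hw1 hw2
      obtain ⟨a, rfl⟩ := (hm1 w).mp hw1
      obtain ⟨b, hb⟩ := (hm3 _).mp hw2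
      simp at hb
    have hne23 : ∀ w, w ∈ P2 → w ∈ P3 → False := by
      intro w hw1 hw2
      obtain ⟨a, rfl⟩ := (hm2 w).mp hw1
      obtain ⟨b, hb⟩ := (hm3 _).mp hw2
      simp at hb
    set fP : Fin 3 → Finset (V₁ ⊕ V₂ ⊕ V₃) := ![P1, P2, P3] with hfP
    set fv : Fin 3 → (V₁ ⊕ V₂ ⊕ V₃) :=
      ![Sum.inl w₁, Sum.inr (Sum.inl w₂), Sum.inr (Sum.inr w₃)] with hfv
    have hvP : ∀ i, fv i ∈ fP i := by
      intro i
      fin_cases i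
      · exact (hm1 _).mpr ⟨w₁, rfl⟩
      · exact (hm2 _).mpr ⟨w₂, rfl⟩
      · exact (hm3 _).mpr ⟨w₃, rfl⟩
    have hPdisj : ∀ i j, i ≠ j → ∀ w, w ∈ fP i → w ∉ fP j := by
      intro i j hij w hwi hwj
      fin_cases i <;> fin_cases j <;>
        first
          | exact hij rfl
          | exact hne12 w hwi hwj
          | exact hne13 w hwi hwj
          | exact hne12 w hwj hwi
          | exact hne13 w hwj hwi
          | exact hne23 w hwi hwj
          | exact hne23 w hwj hwi
    have hvadj : ∀ i j, i ≠ j → H.Adj (fv i) (fv j) := by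
      intro i j hij
      fin_cases i <;> fin_cases j <;>
        first
          | exact absurd rfl hij
          | exact ⟨rfl, rfl⟩
    have hcross : ∀ i a b, H.Adj a b → a ∈ fP i → b ∉ fP i → a = fv i := by
      intro i a b hab ha hb
      fin_cases i
      · obtain ⟨x, rfl⟩ := (hm1 a).mp ha
        rcases b with y | y | y
        · exact absurd ((hm1 _).mpr ⟨y, rfl⟩) hb
        · have hx : x = w₁ ∧ y = w₂ := hab
          exact congrArg Sum.inl hx.1
        · have hx : x = w₁ ∧ y = w₃ := hab
          exact congrArg Sum.inl hx.1
      · obtain ⟨x, rfl⟩ := (hm2 a).mp ha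
        rcases b with y | y | y
        · have hx : x = w₂ ∧ y = w₁ := hab
          exact congrArg (fun z => Sum.inr (Sum.inl z)) hx.1
        · exact absurd ((hm2 _).mpr ⟨y, rfl⟩) hb
        · have hx : x = w₂ ∧ y = w₃ := hab
          exact congrArg (fun z => Sum.inr (Sum.inl z)) hx.1
      · obtain ⟨x, rfl⟩ := (hm3 a).mp ha
        rcases b with y | y | y
        · have hx : x = w₃ ∧ y = w₁ := hab
          exact congrArg (fun z => Sum.inr (Sum.inr z)) hx.1
        · have hx : x = w₃ ∧ y = w₂ := hab
          exact congrArg (fun z => Sum.inr (Sum.inr z)) hx.1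
        · exact absurd ((hm3 _).mpr ⟨y, rfl⟩) hb
    have hconn : ∀ i (X : Finset (V₁ ⊕ V₂ ⊕ V₃)),
        (X ∩ fP i).Nonempty → (fP i \ X).Nonempty →
        ∃ a b, H.Adj a b ∧ a ∈ X ∧ a ∈ fP i ∧ b ∉ X ∧ b ∈ fP i := by
      intro i X hx1 hx2
      fin_cases i
      · exact part_conn G₁ H Sum.inl (fun a b h => h) P1 hm1
          (InDelta_connected h₁).preconnected X hx1 hx2
      · exact part_conn G₂ H (fun b => (Sum.inr (Sum.inl b) : V₁ ⊕ V₂ ⊕ V₃)) (fun a b h => h) P2 hm2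
          (InDelta_connected h₂).preconnected X hx1 hx2
      · exact part_conn G₃ H (fun b => (Sum.inr (Sum.inr b) : V₁ ⊕ V₂ ⊕ V₃)) (fun a b h => h) P3 hm3
          (InDelta_connected h₃).preconnected X hx1 hx2
    have hcore : ∀ lH : List (V₁ ⊕ V₂ ⊕ V₃), IsLinearLayout lH →
        k + 1 + 1 ≤ layoutWidth H lH := by
      intro lH hlH
      refine core_lemma H fP fv (k + 1) (by omega) hvP hPdisj hvadj hcross hconn lH hlH ?_
      intro i
      fin_cases i
      · exact part_exists_bad G₁ H Sum.inl Sum.inl_injective (fun a b => Iff.rfl) P1 hm1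
          lH hlH (k + 1) (by omega) ih₁
      · exact part_exists_bad G₂ H (fun b => (Sum.inr (Sum.inl b) : V₁ ⊕ V₂ ⊕ V₃)) hinj2 (fun a b => Iff.rfl) P2 hm2
          lH hlH (k + 1) (by omega) ih₂
      · exact part_exists_bad G₃ H (fun b => (Sum.inr (Sum.inr b) : V₁ ⊕ V₂ ⊕ V₃)) hinj3 (fun a b => Iff.rfl) P3 hm3
          lH hlH (k + 1) (by omega) ih₃
    refine le_csInf ⟨_, Finset.univ.toList,
      ⟨Finset.univ.nodup_toList, fun v => Finset.mem_toList.mpr (Finset.mem_univ v)⟩, rfl⟩ ?_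
    rintro x ⟨l, hlay, rfl⟩
    rw [← layoutWidth_map e l]
    exact hcore (l.map e) (layout_map_isLayout e.toEquiv l hlay)

theorem delta_linRankWidth_lower {V : Type} [Fintype V] [DecidableEq V]
    (k : ℕ) (G : SimpleGraph V) (hG : InDelta k G) :
    k + 1 ≤ linRankWidth G := by
  exact main_aux hG
end

section
/- For every k ≥ 0, every G ∈ Δ_k, and every vertex v of G, the rooted graph (G, v) has at least 2^{k+1} orbits under its automorphism group, where automorphisms are required to fix v. -/
/-- `x` and `y` are in the same orbit of the automorphism group of the rooted
graph `(G, v)` (automorphisms fixing `v`). -/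
def rootedOrbitRel {V : Type} (G : SimpleGraph V) (v : V) (x y : V) : Prop :=
  ∃ φ : G ≃g G, φ v = v ∧ φ x = y

open SimpleGraph

/-! ### Basic facts about the rooted orbit relation -/

section basics
variable {V W : Type}

lemma rootedOrbitRel_equiv (G : SimpleGraph V) (v : V) : Equivalence (rootedOrbitRel G v) where
  refl x := ⟨Iso.refl, rfl, rfl⟩
  symm := by
    rintro x y ⟨φ, hv, hx⟩
    have h1 := φ.symm_apply_apply v; rw [hv] at h1
    have h2 := φ.symm_apply_apply x; rw [hx] at h2
    exact ⟨φ.symm, h1, h2⟩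
  trans := by
    rintro x y z ⟨φ, hv, hx⟩ ⟨φ', hv', hy⟩
    exact ⟨φ.trans φ', by simp [hv, hv'], by simp [hx, hy]⟩

lemma rootedOrbitRel_mk_eq {G : SimpleGraph V} {v x y : V} :
    Quot.mk (rootedOrbitRel G v) x = Quot.mk (rootedOrbitRel G v) y ↔ rootedOrbitRel G v x y := by
  rw [Quot.eq, (rootedOrbitRel_equiv G v).eqvGen_iff]

def rootedOrbitRel_congr {G : SimpleGraph V} {H : SimpleGraph W} (e : G ≃g H) (v : V) :
    Quot (rootedOrbitRel G v) ≃ Quot (rootedOrbitRel H (e v)) := by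
  refine Quot.congr e.toEquiv ?_
  intro a b
  constructor
  · rintro ⟨φ, hv, ha⟩
    refine ⟨(e.symm.trans φ).trans e, ?_, ?_⟩ <;> simp [hv, ha]
  · rintro ⟨φ, hv, ha⟩
    refine ⟨(e.trans φ).trans e.symm, ?_, ?_⟩
    · apply e.injective; simpa using hv
    · apply e.injective; simpa using ha

lemma quot_finite {α : Type} [Finite α] (r : α → α → Prop) : Finite (Quot r) :=
  Finite.of_surjective (Quot.mk r) Quot.mk_surjective

end basics

/-! ### Cut graphs and components -/

section cut
variable {W W' : Type}

/-- Delete all edges within the vertex set `{A,B,C}`. -/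
def cutG (G : SimpleGraph W) (A B C : W) : SimpleGraph W where
  Adj x y := G.Adj x y ∧ ¬(x ∈ ({A, B, C} : Set W) ∧ y ∈ ({A, B, C} : Set W))
  symm := by constructor; rintro x y ⟨h, hm⟩; exact ⟨h.symm, by tauto⟩
  loopless := ⟨fun x h => G.irrefl h.1⟩

lemma cutG_congr {G : SimpleGraph W} {A B C A' B' C' : W}
    (h : ({A, B, C} : Set W) = {A', B', C'}) : cutG G A B C = cutG G A' B' C' := by
  ext x y; show G.Adj x y ∧ _ ↔ G.Adj x y ∧ _; rw [h]

/-- Components as reachability sets. -/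
def comps (H : SimpleGraph W) (x : W) : Set W := {y | H.Reachable x y}

lemma mem_comps_self (H : SimpleGraph W) (x : W) : x ∈ comps H x := Reachable.refl x

lemma comps_eq_of_mem {H : SimpleGraph W} {x y : W} (h : y ∈ comps H x) :
    comps H x = comps H y := by
  ext z; exact ⟨fun hz => h.symm.trans hz, fun hz => Reachable.trans h hz⟩

lemma comps_disjoint_or_eq (H : SimpleGraph W) (x y : W) :
    comps H x = comps H y ∨ Disjoint (comps H x) (comps H y) := by
  by_cases h : Disjoint (comps H x) (comps H y)
  · exact Or.inr h
  · left
    obtain ⟨z, hzx, hzy⟩ := Set.not_disjoint_iff.mp h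
    rw [comps_eq_of_mem hzx, comps_eq_of_mem hzy]

lemma comps_closed {H : SimpleGraph W} {S : Set W}
    (hS : ∀ x ∈ S, ∀ y, H.Adj x y → y ∈ S) {x y : W} (w : H.Walk x y) (hx : x ∈ S) : y ∈ S := by
  induction w with
  | nil => exact hx
  | cons h w ih => exact ih (hS _ hx _ h)

lemma comps_image {H : SimpleGraph W} {H' : SimpleGraph W'} (e : H ≃g H') (x : W) :
    e '' comps H x = comps H' (e x) := by
  ext y
  constructor
  · rintro ⟨z, hz, rfl⟩; exact Reachable.map e.toHom hz
  · intro hy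
    refine ⟨e.symm y, ?_, by simp⟩
    have := Reachable.map e.symm.toHom hy
    simpa [comps] using this

def cutG_iso {G : SimpleGraph W} {G' : SimpleGraph W'} (e : G ≃g G') (A B C : W) :
    cutG G A B C ≃g cutG G' (e A) (e B) (e C) := by
  refine ⟨e.toEquiv, ?_⟩
  intro x y
  show (G'.Adj (e x) (e y) ∧ _) ↔ (G.Adj x y ∧ _)
  rw [e.map_adj_iff]
  refine and_congr_right fun _ => not_congr (and_congr ?_ ?_) <;>
    simp [Set.mem_insert_iff, e.injective.eq_iff]

/-- A "principal" triangle: pairwise adjacent and all three components after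
deleting its edges have size `n`. -/
def IsPrincipal (H : SimpleGraph W) (n : ℕ) (A B C : W) : Prop :=
  H.Adj A B ∧ H.Adj B C ∧ H.Adj A C ∧
  (comps (cutG H A B C) A).ncard = n ∧ (comps (cutG H A B C) B).ncard = n ∧
  (comps (cutG H A B C) C).ncard = n

lemma principal_map {H : SimpleGraph W} {H' : SimpleGraph W'} (e : H ≃g H') {n : ℕ} {A B C : W}
    (h : IsPrincipal H n A B C) : IsPrincipal H' n (e A) (e B) (e C) := by
  obtain ⟨h1, h2, h3, c1, c2, c3⟩ := h
  have key : ∀ x : W, (comps (cutG H' (e A) (e B) (e C)) (e x)).ncard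
      = (comps (cutG H A B C) x).ncard := by
    intro x
    have him := comps_image (cutG_iso e A B C) x
    have hfun : ⇑(cutG_iso e A B C) = ⇑e := rfl
    rw [hfun] at him
    rw [← him, Set.ncard_image_of_injective _ e.injective]
  exact ⟨e.map_adj_iff.2 h1, e.map_adj_iff.2 h2, e.map_adj_iff.2 h3,
    (key A).trans c1, (key B).trans c2, (key C).trans c3⟩

end cut

/-! ### Structure of delta compositions -/

section delta
variable {V₁ V₂ V₃ : Type} {G₁ : SimpleGraph V₁} {G₂ : SimpleGraph V₂} {G₃ : SimpleGraph V₃}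
  {v₁ : V₁} {v₂ : V₂} {v₃ : V₃}

local notation "D" => deltaComp G₁ G₂ G₃ v₁ v₂ v₃
local notation "t₁" => (Sum.inl v₁ : V₁ ⊕ V₂ ⊕ V₃)
local notation "t₂" => (Sum.inr (Sum.inl v₂) : V₁ ⊕ V₂ ⊕ V₃)
local notation "t₃" => (Sum.inr (Sum.inr v₃) : V₁ ⊕ V₂ ⊕ V₃)
local notation "TS" => ({t₁, t₂, t₃} : Set (V₁ ⊕ V₂ ⊕ V₃))
local notation "part1" => (Set.range Sum.inl : Set (V₁ ⊕ V₂ ⊕ V₃))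
local notation "part2" => (Set.range (fun y : V₂ => Sum.inr (Sum.inl y)) : Set (V₁ ⊕ V₂ ⊕ V₃))
local notation "part3" => (Set.range (fun z : V₃ => Sum.inr (Sum.inr z)) : Set (V₁ ⊕ V₂ ⊕ V₃))

/-- rotation isomorphism -/
def deltaRot : deltaComp G₁ G₂ G₃ v₁ v₂ v₃ ≃g deltaComp G₂ G₃ G₁ v₂ v₃ v₁ := by
  refine ⟨⟨fun x => match x with
    | .inl a => .inr (.inr a)
    | .inr (.inl b) => .inl b
    | .inr (.inr c) => .inr (.inl c),
    fun x => match x with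
    | .inl b => .inr (.inl b)
    | .inr (.inl c) => .inr (.inr c)
    | .inr (.inr a) => .inl a, ?_, ?_⟩, ?_⟩
  · rintro (a|b|c) <;> rfl
  · rintro (b|c|a) <;> rfl
  · rintro (a|b|c) (a'|b'|c') <;> exact Iff.rfl

lemma triangle_cases {A B C : V₁ ⊕ V₂ ⊕ V₃} (hAB : (D).Adj A B) (hBC : (D).Adj B C)
    (hAC : (D).Adj A C) :
    (∃ a b c : V₁, A = .inl a ∧ B = .inl b ∧ C = .inl c) ∨
    (∃ a b c : V₂, A = .inr (.inl a) ∧ B = .inr (.inl b) ∧ C = .inr (.inl c)) ∨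
    (∃ a b c : V₃, A = .inr (.inr a) ∧ B = .inr (.inr b) ∧ C = .inr (.inr c)) ∨
    (A ∈ TS ∧ B ∈ TS ∧ C ∈ TS) := by
  rcases A with a | a | a <;> rcases B with b | b | b <;> rcases C with c | c | c <;>
    first
      | exact Or.inl ⟨_, _, _, rfl, rfl, rfl⟩
      | exact Or.inr (Or.inl ⟨_, _, _, rfl, rfl, rfl⟩)
      | exact Or.inr (Or.inr (Or.inl ⟨_, _, _, rfl, rfl, rfl⟩))
      | (rw [hAC.1, hBC.1] at hAB; exact absurd rfl hAB.ne)
      | (rw [hAB.1, hBC.2] at hAC; exact absurd rfl hAC.ne)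
      | (rw [hAB.2, hAC.2] at hBC; exact absurd rfl hBC.ne)
      | exact Or.inr (Or.inr (Or.inr ⟨by simp [hAB.1], by simp [hAB.2], by simp [hBC.2]⟩))

def hom1cutT : G₁ →g cutG D t₁ t₂ t₃ where
  toFun := Sum.inl
  map_rel' := by
    intro a b h
    refine ⟨h, ?_⟩
    rintro ⟨(ha | ha | ha), (hb | hb | hb)⟩ <;> simp_all <;> exact G₁.irrefl h

def hom2cutT : G₂ →g cutG D t₁ t₂ t₃ where
  toFun y := Sum.inr (Sum.inl y)
  map_rel' := by
    intro a b h
    refine ⟨h, ?_⟩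
    rintro ⟨(ha | ha | ha), (hb | hb | hb)⟩ <;> simp_all <;> exact G₂.irrefl h

def hom3cutT : G₃ →g cutG D t₁ t₂ t₃ where
  toFun z := Sum.inr (Sum.inr z)
  map_rel' := by
    intro a b h
    refine ⟨h, ?_⟩
    rintro ⟨(ha | ha | ha), (hb | hb | hb)⟩ <;> simp_all <;> exact G₃.irrefl h

def hom2cutL (a b c : V₁) : G₂ →g cutG D (.inl a) (.inl b) (.inl c) where
  toFun y := Sum.inr (Sum.inl y)
  map_rel' := by
    intro x y h
    exact ⟨h, by rintro ⟨(hx | hx | hx), -⟩ <;> simp_all⟩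

def hom3cutL (a b c : V₁) : G₃ →g cutG D (.inl a) (.inl b) (.inl c) where
  toFun z := Sum.inr (Sum.inr z)
  map_rel' := by
    intro x y h
    exact ⟨h, by rintro ⟨(hx | hx | hx), -⟩ <;> simp_all⟩

lemma part1_comps (h1 : G₁.Connected) : comps (cutG D t₁ t₂ t₃) t₁ = part1 := by
  apply Set.eq_of_subset_of_subset
  · intro y hy
    obtain ⟨w⟩ := hy
    refine comps_closed ?_ w ⟨v₁, rfl⟩
    rintro x ⟨a, rfl⟩ y ⟨hadj, hm⟩
    rcases y with b | b | b
    · exact ⟨b, rfl⟩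
    · obtain ⟨rfl, rfl⟩ := hadj
      exact absurd ⟨Or.inl rfl, Or.inr (Or.inl rfl)⟩ hm
    · obtain ⟨rfl, rfl⟩ := hadj
      exact absurd ⟨Or.inl rfl, Or.inr (Or.inr rfl)⟩ hm
  · rintro y ⟨a, rfl⟩
    exact Reachable.map hom1cutT (h1.preconnected v₁ a)

lemma part2_comps (h2 : G₂.Connected) : comps (cutG D t₁ t₂ t₃) t₂ = part2 := by
  apply Set.eq_of_subset_of_subset
  · intro y hy
    obtain ⟨w⟩ := hy
    refine comps_closed ?_ w ⟨v₂, rfl⟩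
    rintro x ⟨a, rfl⟩ y ⟨hadj, hm⟩
    rcases y with b | b | b
    · obtain ⟨rfl, rfl⟩ := hadj
      exact absurd ⟨Or.inr (Or.inl rfl), Or.inl rfl⟩ hm
    · exact ⟨b, rfl⟩
    · obtain ⟨rfl, rfl⟩ := hadj
      exact absurd ⟨Or.inr (Or.inl rfl), Or.inr (Or.inr rfl)⟩ hm
  · rintro y ⟨a, rfl⟩
    exact Reachable.map hom2cutT (h2.preconnected v₂ a)

lemma part3_comps (h3 : G₃.Connected) : comps (cutG D t₁ t₂ t₃) t₃ = part3 := by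
  apply Set.eq_of_subset_of_subset
  · intro y hy
    obtain ⟨w⟩ := hy
    refine comps_closed ?_ w ⟨v₃, rfl⟩
    rintro x ⟨a, rfl⟩ y ⟨hadj, hm⟩
    rcases y with b | b | b
    · obtain ⟨rfl, rfl⟩ := hadj
      exact absurd ⟨Or.inr (Or.inr rfl), Or.inl rfl⟩ hm
    · obtain ⟨rfl, rfl⟩ := hadj
      exact absurd ⟨Or.inr (Or.inr rfl), Or.inr (Or.inl rfl)⟩ hm
    · exact ⟨b, rfl⟩
  · rintro y ⟨a, rfl⟩
    exact Reachable.map hom3cutT (h3.preconnected v₃ a)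

lemma deltaComp_connected_s19 (h1 : G₁.Connected) (h2 : G₂.Connected) (h3 : G₃.Connected) :
    (D).Connected := by
  have hne : Nonempty (V₁ ⊕ V₂ ⊕ V₃) := ⟨.inl v₁⟩
  rw [connected_iff]
  refine ⟨?_, hne⟩
  have hc : ∀ x : V₁ ⊕ V₂ ⊕ V₃, (D).Reachable (.inl v₁) x := by
    have e12 : (D).Adj t₁ t₂ := ⟨rfl, rfl⟩
    have e13 : (D).Adj t₁ t₃ := ⟨rfl, rfl⟩
    rintro (a | b | c)
    · exact Reachable.map ⟨Sum.inl, fun h => h⟩ (h1.preconnected v₁ a)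
    · exact (e12.reachable).trans
        (Reachable.map ⟨fun y => Sum.inr (Sum.inl y), fun h => h⟩ (h2.preconnected v₂ b))
    · exact (e13.reachable).trans
        (Reachable.map ⟨fun z => Sum.inr (Sum.inr z), fun h => h⟩ (h3.preconnected v₃ c))
  exact fun x y => (hc x).symm.trans (hc y)

lemma part1_ncard : (part1).ncard = Nat.card V₁ := by
  rw [← Nat.card_coe_set_eq, Nat.card_range_of_injective Sum.inl_injective]

lemma part2_ncard : (part2).ncard = Nat.card V₂ := by
  rw [← Nat.card_coe_set_eq]
  exact Nat.card_range_of_injective (fun a b h => by simpa using h)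

lemma part3_ncard : (part3).ncard = Nat.card V₃ := by
  rw [← Nat.card_coe_set_eq]
  exact Nat.card_range_of_injective (fun a b h => by simpa using h)

lemma main_principal {n : ℕ} (h1 : G₁.Connected) (h2 : G₂.Connected) (h3 : G₃.Connected)
    (hc1 : Nat.card V₁ = n) (hc2 : Nat.card V₂ = n) (hc3 : Nat.card V₃ = n) :
    IsPrincipal D n t₁ t₂ t₃ := by
  refine ⟨⟨rfl, rfl⟩, ⟨rfl, rfl⟩, ⟨rfl, rfl⟩, ?_, ?_, ?_⟩
  · rw [part1_comps h1, part1_ncard, hc1]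
  · rw [part2_comps h2, part2_ncard, hc2]
  · rw [part3_comps h3, part3_ncard, hc3]

lemma inner_not_principal [Finite V₁] [Finite V₂] [Finite V₃] {n : ℕ}
    (hc1 : Nat.card V₁ = n) (hc2 : Nat.card V₂ = n) (hc3 : Nat.card V₃ = n)
    (h2 : G₂.Connected) (h3 : G₃.Connected) (a b c : V₁) :
    ¬ IsPrincipal D n (.inl a) (.inl b) (.inl c) := by
  rintro ⟨hAB, hBC, hAC, ca, cb, cc⟩
  set K := cutG D (.inl a) (.inl b) (.inl c) with hK
  -- the component of `inl v₁` contains `inl v₁`, all of part2 and part3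
  have hbig : insert t₁ (part2 ∪ part3) ⊆ comps K t₁ := by
    have r2 : (K).Reachable t₁ t₂ := by
      refine Adj.reachable ⟨⟨rfl, rfl⟩, ?_⟩
      rintro ⟨-, (h | h | h)⟩ <;> simp at h
    have r3 : (K).Reachable t₁ t₃ := by
      refine Adj.reachable ⟨⟨rfl, rfl⟩, ?_⟩
      rintro ⟨-, (h | h | h)⟩ <;> simp at h
    rintro x (rfl | ⟨y, rfl⟩ | ⟨z, rfl⟩)
    · exact mem_comps_self K _
    · exact r2.trans (Reachable.map (hom2cutL a b c) (h2.preconnected v₂ y))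
    · exact r3.trans (Reachable.map (hom3cutL a b c) (h3.preconnected v₃ z))
  have hbigcard : 2 * n + 1 ≤ (comps K t₁).ncard := by
    have hdisj : Disjoint (part2) (part3) := by
      rw [Set.disjoint_left]; rintro x ⟨y, rfl⟩ ⟨z, hz⟩; simp at hz
    have hni : t₁ ∉ (part2 ∪ part3) := by
      rintro (⟨y, hy⟩ | ⟨z, hz⟩)
      · simp at hy
      · simp at hz
    have h23 : (part2 ∪ part3).ncard = n + n := by
      rw [Set.ncard_union_eq hdisj (Set.toFinite _) (Set.toFinite _), part2_ncard, part3_ncard,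
        hc2, hc3]
    have hins : (insert t₁ (part2 ∪ part3)).ncard = n + n + 1 := by
      rw [Set.ncard_insert_of_notMem hni (Set.toFinite _), h23]
    calc 2 * n + 1 = n + n + 1 := by ring
    _ = (insert t₁ (part2 ∪ part3)).ncard := hins.symm
    _ ≤ (comps K t₁).ncard := Set.ncard_le_ncard hbig (Set.toFinite _)
  have htot : (Set.univ : Set (V₁ ⊕ V₂ ⊕ V₃)).ncard = 3 * n := by
    rw [Set.ncard_univ, Nat.card_sum, Nat.card_sum, hc1, hc2, hc3]; ring
  rcases comps_disjoint_or_eq K (.inl a) t₁ with heq | hdisj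
  · rw [heq] at ca
    omega
  · have hsub : comps K (.inl a) ∪ comps K t₁ ⊆ Set.univ := Set.subset_univ _
    have := Set.ncard_le_ncard hsub (Set.toFinite _)
    rw [Set.ncard_union_eq hdisj (Set.toFinite _) (Set.toFinite _), ca, htot] at this
    omega

lemma principal_eq_main [Finite V₁] [Finite V₂] [Finite V₃] {n : ℕ}
    (h1 : G₁.Connected) (h2 : G₂.Connected) (h3 : G₃.Connected)
    (hc1 : Nat.card V₁ = n) (hc2 : Nat.card V₂ = n) (hc3 : Nat.card V₃ = n)
    {A B C : V₁ ⊕ V₂ ⊕ V₃} (hP : IsPrincipal D n A B C) :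
    A ∈ TS ∧ B ∈ TS ∧ C ∈ TS := by
  rcases triangle_cases hP.1 hP.2.1 hP.2.2.1 with ⟨a, b, c, rfl, rfl, rfl⟩ | ⟨a, b, c, rfl, rfl, rfl⟩ |
    ⟨a, b, c, rfl, rfl, rfl⟩ | h
  · exact absurd hP (inner_not_principal hc1 hc2 hc3 h2 h3 a b c)
  · have := principal_map (deltaRot (G₁ := G₁)) hP
    exact absurd this (inner_not_principal hc2 hc3 hc1 h3 h1 a b c)
  · have := principal_map ((deltaRot (G₁ := G₁)).trans deltaRot) hP
    exact absurd this (inner_not_principal hc3 hc1 hc2 h1 h2 a b c)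
  · exact h

lemma aut_parts [Finite V₁] [Finite V₂] [Finite V₃] {n : ℕ}
    (h1 : G₁.Connected) (h2 : G₂.Connected) (h3 : G₃.Connected)
    (hc1 : Nat.card V₁ = n) (hc2 : Nat.card V₂ = n) (hc3 : Nat.card V₃ = n)
    (φ : D ≃g D) {r : V₁} (hr : φ (.inl r) = .inl r) :
    (∀ x, ∃ y, φ (.inl x) = .inl y) ∧
    ((φ t₂ = t₂ ∧ (∀ x, ∃ y, φ (.inr (.inl x)) = .inr (.inl y)) ∧
      (∀ x, ∃ y, φ (.inr (.inr x)) = .inr (.inr y))) ∨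
     (φ t₂ = t₃ ∧ φ t₃ = t₂ ∧ (∀ x, ∃ y, φ (.inr (.inl x)) = .inr (.inr y)) ∧
      (∀ x, ∃ y, φ (.inr (.inr x)) = .inr (.inl y)))) := by
  have hPT : IsPrincipal D n t₁ t₂ t₃ := main_principal h1 h2 h3 hc1 hc2 hc3
  have hmem := principal_eq_main h1 h2 h3 hc1 hc2 hc3 (principal_map φ hPT)
  have hmem' := principal_eq_main h1 h2 h3 hc1 hc2 hc3 (principal_map φ.symm hPT)
  have lift : ∀ {x y : V₁ ⊕ V₂ ⊕ V₃}, φ.symm x = y → x = φ y := by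
    intro x y h
    rw [← h, RelIso.apply_symm_apply]
  have hTS : ({φ t₁, φ t₂, φ t₃} : Set (V₁ ⊕ V₂ ⊕ V₃)) = TS := by
    apply Set.eq_of_subset_of_subset
    · rintro x (rfl | rfl | rfl)
      · exact hmem.1
      · exact hmem.2.1
      · exact hmem.2.2
    · rintro x (rfl | rfl | rfl)
      · rcases hmem'.1 with h | h | h
        · exact Or.inl (lift h)
        · exact Or.inr (Or.inl (lift h))
        · exact Or.inr (Or.inr (lift h))
      · rcases hmem'.2.1 with h | h | h
        · exact Or.inl (lift h)
        · exact Or.inr (Or.inl (lift h))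
        · exact Or.inr (Or.inr (lift h))
      · rcases hmem'.2.2 with h | h | h
        · exact Or.inl (lift h)
        · exact Or.inr (Or.inl (lift h))
        · exact Or.inr (Or.inr (lift h))
  have hcut : cutG D (φ t₁) (φ t₂) (φ t₃) = cutG D t₁ t₂ t₃ := cutG_congr hTS
  have himg : ∀ x, φ '' comps (cutG D t₁ t₂ t₃) x = comps (cutG D t₁ t₂ t₃) (φ x) := by
    intro x
    have h := comps_image (cutG_iso φ t₁ t₂ t₃) x
    have hfun : ⇑(cutG_iso φ t₁ t₂ t₃) = ⇑φ := rfl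
    rw [hfun, hcut] at h
    exact h
  have ip1 : φ '' part1 = comps (cutG D t₁ t₂ t₃) (φ t₁) := by
    rw [← part1_comps h1]; exact himg _
  have ip2 : φ '' part2 = comps (cutG D t₁ t₂ t₃) (φ t₂) := by
    rw [← part2_comps h2]; exact himg _
  have ip3 : φ '' part3 = comps (cutG D t₁ t₂ t₃) (φ t₃) := by
    rw [← part3_comps h3]; exact himg _
  have hrmem : (Sum.inl r : V₁ ⊕ V₂ ⊕ V₃) ∈ φ '' part1 := ⟨.inl r, ⟨r, rfl⟩, hr⟩
  have ht1 : φ t₁ = t₁ := by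
    rcases hmem.1 with h | h | h
    · exact h
    · rw [ip1, h, part2_comps h2] at hrmem
      obtain ⟨y, hy⟩ := hrmem; simp at hy
    · rw [ip1, h, part3_comps h3] at hrmem
      obtain ⟨y, hy⟩ := hrmem; simp at hy
  have k1 : ∀ x, ∃ y, φ (.inl x) = .inl y := by
    intro x
    have hx : φ (.inl x) ∈ φ '' part1 := ⟨.inl x, ⟨x, rfl⟩, rfl⟩
    rw [ip1, ht1, part1_comps h1] at hx
    obtain ⟨y, hy⟩ := hx
    exact ⟨y, hy.symm⟩
  refine ⟨k1, ?_⟩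
  rcases hmem.2.1 with h | h | h
  · exfalso
    have := φ.injective (h.trans ht1.symm)
    simp at this
  · -- φ fixes part 2 and part 3
    have ht3 : φ t₃ = t₃ := by
      rcases hmem.2.2 with h' | h' | h'
      · exfalso; have := φ.injective (h'.trans ht1.symm); simp at this
      · exfalso; have := φ.injective (h'.trans h.symm); simp at this
      · exact h'
    refine Or.inl ⟨h, ?_, ?_⟩
    · intro x
      have hx : φ (.inr (.inl x)) ∈ φ '' part2 := ⟨.inr (.inl x), ⟨x, rfl⟩, rfl⟩
      rw [ip2, h, part2_comps h2] at hx
      obtain ⟨y, hy⟩ := hx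
      exact ⟨y, hy.symm⟩
    · intro x
      have hx : φ (.inr (.inr x)) ∈ φ '' part3 := ⟨.inr (.inr x), ⟨x, rfl⟩, rfl⟩
      rw [ip3, ht3, part3_comps h3] at hx
      obtain ⟨y, hy⟩ := hx
      exact ⟨y, hy.symm⟩
  · -- φ swaps part 2 and part 3
    have ht3 : φ t₃ = t₂ := by
      rcases hmem.2.2 with h' | h' | h'
      · exfalso; have := φ.injective (h'.trans ht1.symm); simp at this
      · exact h'
      · exfalso; have := φ.injective (h'.trans h.symm); simp at this
    refine Or.inr ⟨h, ht3, ?_, ?_⟩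
    · intro x
      have hx : φ (.inr (.inl x)) ∈ φ '' part2 := ⟨.inr (.inl x), ⟨x, rfl⟩, rfl⟩
      rw [ip2, h, part3_comps h3] at hx
      obtain ⟨y, hy⟩ := hx
      exact ⟨y, hy.symm⟩
    · intro x
      have hx : φ (.inr (.inr x)) ∈ φ '' part3 := ⟨.inr (.inr x), ⟨x, rfl⟩, rfl⟩
      rw [ip3, ht3, part2_comps h2] at hx
      obtain ⟨y, hy⟩ := hx
      exact ⟨y, hy.symm⟩

end delta

/-! ### Invariants of the classes `Δ_k` -/

section invariants
variable {V : Type}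

lemma connected_of_iso {W : Type} {G : SimpleGraph V} {H : SimpleGraph W} (e : G ≃g H)
    (h : G.Connected) : H.Connected := by
  rw [connected_iff] at h ⊢
  refine ⟨fun x y => ?_, Nonempty.map e h.2⟩
  have := Reachable.map e.toHom (h.1 (e.symm x) (e.symm y))
  simpa using this

lemma inDelta_finite {k : ℕ} {G : SimpleGraph V} (h : InDelta k G) : Finite V := by
  induction h with
  | base G e =>
    obtain ⟨e⟩ := e
    exact Finite.of_equiv _ e.toEquiv.symm
  | comp G v₁ v₂ v₃ h₁ h₂ h₃ e ih₁ ih₂ ih₃ =>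
    obtain ⟨e⟩ := e
    have := ih₁; have := ih₂; have := ih₃
    exact Finite.of_equiv _ e.toEquiv.symm

lemma inDelta_card {k : ℕ} {G : SimpleGraph V} (h : InDelta k G) : Nat.card V = 2 * 3 ^ k := by
  induction h with
  | base G e =>
    obtain ⟨e⟩ := e
    rw [Nat.card_congr e.toEquiv]
    simp
  | comp G v₁ v₂ v₃ h₁ h₂ h₃ e ih₁ ih₂ ih₃ =>
    obtain ⟨e⟩ := e
    have f₁ := inDelta_finite h₁
    have f₂ := inDelta_finite h₂
    have f₃ := inDelta_finite h₃
    rw [Nat.card_congr e.toEquiv, Nat.card_sum, Nat.card_sum, ih₁, ih₂, ih₃]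
    ring

lemma inDelta_connected {k : ℕ} {G : SimpleGraph V} (h : InDelta k G) : G.Connected := by
  induction h with
  | base G e =>
    obtain ⟨e⟩ := e
    exact connected_of_iso e.symm SimpleGraph.connected_top
  | comp G v₁ v₂ v₃ h₁ h₂ h₃ e ih₁ ih₂ ih₃ =>
    obtain ⟨e⟩ := e
    exact connected_of_iso e.symm (deltaComp_connected_s19 ih₁ ih₂ ih₃)

end invariants

/-! ### Extracting part isomorphisms -/

lemma extract_iso {α β : Type} {A : SimpleGraph α} {B : SimpleGraph β}
    (ι : α → β) (hinj : Function.Injective ι)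
    (hadj : ∀ a b, B.Adj (ι a) (ι b) ↔ A.Adj a b)
    (φ : B ≃g B) (h : ∀ x, ∃ y, φ (ι x) = ι y) (h' : ∀ x, ∃ y, φ.symm (ι x) = ι y) :
    ∃ ψ : A ≃g A, ∀ x, φ (ι x) = ι (ψ x) := by
  choose g hg using h
  choose g' hg' using h'
  have hgg' : ∀ x, g' (g x) = x := fun x =>
    hinj (by rw [← hg' (g x), ← hg x, RelIso.symm_apply_apply])
  have hg'g : ∀ x, g (g' x) = x := fun x =>
    hinj (by rw [← hg (g' x), ← hg' x, RelIso.apply_symm_apply])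
  refine ⟨⟨⟨g, g', hgg', hg'g⟩, ?_⟩, hg⟩
  intro a b
  show A.Adj (g a) (g b) ↔ A.Adj a b
  rw [← hadj, ← hg, ← hg]
  rw [φ.map_adj_iff, hadj]

/-! ### The counting step -/

section counting
variable {V₁ V₂ V₃ : Type} {G₁ : SimpleGraph V₁} {G₂ : SimpleGraph V₂} {G₃ : SimpleGraph V₃}
  {v₁ : V₁} {v₂ : V₂} {v₃ : V₃}

local notation "D" => deltaComp G₁ G₂ G₃ v₁ v₂ v₃

lemma count_step [Finite V₁] [Finite V₂] [Finite V₃] {n m : ℕ}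
    (h1 : G₁.Connected) (h2 : G₂.Connected) (h3 : G₃.Connected)
    (hc1 : Nat.card V₁ = n) (hc2 : Nat.card V₂ = n) (hc3 : Nat.card V₃ = n)
    (r : V₁)
    (ih1 : m ≤ Nat.card (Quot (rootedOrbitRel G₁ r)))
    (ih2 : m ≤ Nat.card (Quot (rootedOrbitRel G₂ v₂))) :
    2 * m ≤ Nat.card (Quot (rootedOrbitRel D (Sum.inl r))) := by
  classical
  have hAP := fun (φ : D ≃g D) (hφ : φ (.inl r) = .inl r) =>
    aut_parts h1 h2 h3 hc1 hc2 hc3 φ hφ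
  have hsymm_fix : ∀ (φ : D ≃g D), φ (.inl r) = .inl r → φ.symm (.inl r) = .inl r := by
    intro φ hφ
    conv_lhs => rw [← hφ]
    exact φ.symm_apply_apply _
  have ext1 : ∀ (φ : D ≃g D), φ (.inl r) = .inl r →
      ∃ ψ : G₁ ≃g G₁, ψ r = r ∧ ∀ x, φ (.inl x) = .inl (ψ x) := by
    intro φ hφ
    obtain ⟨ψ, hψ⟩ := extract_iso Sum.inl Sum.inl_injective (fun a b => Iff.rfl) φ
      (hAP φ hφ).1 (hAP φ.symm (hsymm_fix φ hφ)).1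
    refine ⟨ψ, ?_, hψ⟩
    have h := hψ r
    rw [hφ] at h
    exact (Sum.inl_injective h).symm
  have ext2 : ∀ (φ : D ≃g D) (hφ : φ (.inl r) = .inl r),
      (∀ x, ∃ y, φ (.inr (.inl x)) = .inr (.inl y)) →
      ∃ ψ : G₂ ≃g G₂, ψ v₂ = v₂ ∧ ∀ x, φ (.inr (.inl x)) = .inr (.inl (ψ x)) := by
    intro φ hφ hkeep
    have hKφ := (hAP φ hφ).2
    rcases hKφ with hK | hS
    swap
    · exfalso
      obtain ⟨y, hy⟩ := hS.2.2.1 v₂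
      obtain ⟨y', hy'⟩ := hkeep v₂
      rw [hy'] at hy; simp at hy
    have hsk : ∀ x, ∃ y, φ.symm (.inr (.inl x)) = .inr (.inl y) := by
      rcases (hAP φ.symm (hsymm_fix φ hφ)).2 with hK' | hS'
      · exact hK'.2.1
      · exfalso
        have h2 : (Sum.inr (Sum.inl v₂) : V₁ ⊕ V₂ ⊕ V₃) = φ (.inr (.inr v₃)) := by
          rw [← hS'.1, RelIso.apply_symm_apply]
        obtain ⟨y, hy⟩ := hK.2.2 v₃
        rw [hy] at h2; simp at h2
    obtain ⟨ψ, hψ⟩ := extract_iso (fun y : V₂ => Sum.inr (Sum.inl y))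
      (fun a b hab => by simpa using hab) (fun a b => Iff.rfl) φ hkeep hsk
    refine ⟨ψ, ?_, hψ⟩
    have h := hψ v₂
    rw [hK.1] at h
    simpa using h.symm
  set Q₁ := Quot (rootedOrbitRel G₁ r) with hQ₁
  set Q₂ := Quot (rootedOrbitRel G₂ v₂) with hQ₂
  haveI : Finite Q₁ := quot_finite _
  haveI : Finite Q₂ := quot_finite _
  haveI : Finite (Quot (rootedOrbitRel D (Sum.inl r))) := quot_finite _
  suffices hsur : ∃ F : Quot (rootedOrbitRel D (Sum.inl r)) → Q₁ ⊕ Q₂, Function.Surjective F by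
    obtain ⟨F, hF⟩ := hsur
    have hle := Nat.card_le_card_of_surjective F hF
    rw [Nat.card_sum] at hle
    omega
  by_cases hsw : ∃ φ₀ : D ≃g D, φ₀ (.inl r) = .inl r ∧ ∃ y, φ₀ (.inr (.inr v₃)) = .inr (.inl y)
  · obtain ⟨φ₀, hφ₀, y₀, hy₀⟩ := hsw
    have hS₀ : φ₀ (.inr (.inl v₂)) = (.inr (.inr v₃) : V₁ ⊕ V₂ ⊕ V₃) ∧
        φ₀ (.inr (.inr v₃)) = (.inr (.inl v₂) : V₁ ⊕ V₂ ⊕ V₃) ∧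
        (∀ x, ∃ y, φ₀ (.inr (.inl x)) = .inr (.inr y)) ∧
        (∀ x, ∃ y, φ₀ (.inr (.inr x)) = .inr (.inl y)) := by
      rcases (hAP φ₀ hφ₀).2 with hK | hS
      · exfalso
        obtain ⟨y, hy⟩ := hK.2.2 v₃
        rw [hy] at hy₀; simp at hy₀
      · exact hS
    choose e3 he3 using hS₀.2.2.2
    set f : V₁ ⊕ V₂ ⊕ V₃ → Q₁ ⊕ Q₂ := fun w => match w with
      | .inl x => .inl (Quot.mk _ x)
      | .inr (.inl y) => .inr (Quot.mk _ y)
      | .inr (.inr z) => .inr (Quot.mk _ (e3 z)) with hf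
    have hconst : ∀ a b, rootedOrbitRel D (Sum.inl r) a b → f a = f b := by
      rintro a b ⟨φ, hφ, rfl⟩
      rcases a with x | x | z
      · obtain ⟨ψ, hψr, hψ⟩ := ext1 φ hφ
        rw [hψ x]
        exact congrArg Sum.inl (Quot.sound ⟨ψ, hψr, rfl⟩)
      · rcases (hAP φ hφ).2 with hK | hS
        · obtain ⟨ψ, hψv, hψ⟩ := ext2 φ hφ hK.2.1
          rw [hψ x]
          exact congrArg Sum.inr (Quot.sound ⟨ψ, hψv, rfl⟩)
        · obtain ⟨z, hz⟩ := hS.2.2.1 x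
          rw [hz]
          have h' : (φ.trans φ₀) (.inr (.inl x)) = .inr (.inl (e3 z)) := by
            show φ₀ (φ _) = _
            rw [hz, he3]
          have hρr : (φ.trans φ₀) (.inl r) = .inl r := by
            show φ₀ (φ _) = _
            rw [hφ, hφ₀]
          have hρk : ∀ u, ∃ y, (φ.trans φ₀) (.inr (.inl u)) = .inr (.inl y) := by
            rcases (hAP (φ.trans φ₀) hρr).2 with hK' | hS'
            · exact hK'.2.1
            · exfalso
              obtain ⟨y, hy⟩ := hS'.2.2.1 x
              rw [h'] at hy; simp at hy
          obtain ⟨ψ, hψv, hψ⟩ := ext2 (φ.trans φ₀) hρr hρk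
          have hx : ψ x = e3 z := by
            have h := hψ x
            rw [h'] at h
            simpa using h.symm
          exact congrArg Sum.inr (Quot.sound ⟨ψ, hψv, hx⟩)
      · rcases (hAP φ hφ).2 with hK | hS
        · obtain ⟨z', hz'⟩ := hK.2.2 z
          rw [hz']
          have hsymm3 : φ₀.symm (.inr (.inl (e3 z))) = (.inr (.inr z) : V₁ ⊕ V₂ ⊕ V₃) := by
            rw [← he3 z, RelIso.symm_apply_apply]
          have h' : ((φ₀.symm.trans φ).trans φ₀) (.inr (.inl (e3 z))) = .inr (.inl (e3 z')) := by
            show φ₀ (φ (φ₀.symm _)) = _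
            rw [hsymm3, hz', he3]
          have hρr : ((φ₀.symm.trans φ).trans φ₀) (.inl r) = .inl r := by
            show φ₀ (φ (φ₀.symm _)) = _
            rw [hsymm_fix φ₀ hφ₀, hφ, hφ₀]
          have hρk : ∀ u, ∃ y, ((φ₀.symm.trans φ).trans φ₀) (.inr (.inl u)) = .inr (.inl y) := by
            rcases (hAP ((φ₀.symm.trans φ).trans φ₀) hρr).2 with hK' | hS'
            · exact hK'.2.1
            · exfalso
              obtain ⟨y, hy⟩ := hS'.2.2.1 (e3 z)
              rw [h'] at hy; simp at hy
          obtain ⟨ψ, hψv, hψ⟩ := ext2 _ hρr hρk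
          have hx : ψ (e3 z) = e3 z' := by
            have h := hψ (e3 z)
            rw [h'] at h
            simpa using h.symm
          exact congrArg Sum.inr (Quot.sound ⟨ψ, hψv, hx⟩)
        · obtain ⟨y, hy⟩ := hS.2.2.2 z
          rw [hy]
          have hsymm3 : φ₀.symm (.inr (.inl (e3 z))) = (.inr (.inr z) : V₁ ⊕ V₂ ⊕ V₃) := by
            rw [← he3 z, RelIso.symm_apply_apply]
          have h' : (φ₀.symm.trans φ) (.inr (.inl (e3 z))) = .inr (.inl y) := by
            show φ (φ₀.symm _) = _
            rw [hsymm3, hy]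
          have hρr : (φ₀.symm.trans φ) (.inl r) = .inl r := by
            show φ (φ₀.symm _) = _
            rw [hsymm_fix φ₀ hφ₀, hφ]
          have hρk : ∀ u, ∃ y, (φ₀.symm.trans φ) (.inr (.inl u)) = .inr (.inl y) := by
            rcases (hAP (φ₀.symm.trans φ) hρr).2 with hK' | hS'
            · exact hK'.2.1
            · exfalso
              obtain ⟨y', hy'⟩ := hS'.2.2.1 (e3 z)
              rw [h'] at hy'; simp at hy'
          obtain ⟨ψ, hψv, hψ⟩ := ext2 _ hρr hρk
          have hx : ψ (e3 z) = y := by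
            have h := hψ (e3 z)
            rw [h'] at h
            simpa using h.symm
          exact congrArg Sum.inr (Quot.sound ⟨ψ, hψv, hx⟩)
    refine ⟨Quot.lift f hconst, ?_⟩
    rintro (q | q)
    · obtain ⟨x, rfl⟩ := Quot.exists_rep q
      exact ⟨Quot.mk _ (.inl x), rfl⟩
    · obtain ⟨y, rfl⟩ := Quot.exists_rep q
      exact ⟨Quot.mk _ (.inr (.inl y)), rfl⟩
  · push_neg at hsw
    set f : V₁ ⊕ V₂ ⊕ V₃ → Q₁ ⊕ Q₂ := fun w => match w with
      | .inl x => .inl (Quot.mk _ x)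
      | .inr (.inl y) => .inr (Quot.mk _ y)
      | .inr (.inr z) => .inr (Quot.mk _ v₂) with hf
    have hnoswap : ∀ (φ : D ≃g D), φ (.inl r) = .inl r →
        (φ (.inr (.inl v₂)) = (.inr (.inl v₂) : V₁ ⊕ V₂ ⊕ V₃) ∧
         (∀ x, ∃ y, φ (.inr (.inl x)) = .inr (.inl y)) ∧
         (∀ x, ∃ y, φ (.inr (.inr x)) = .inr (.inr y))) := by
      intro φ hφ
      rcases (hAP φ hφ).2 with hK | hS
      · exact hK
      · exact absurd hS.2.1 (hsw φ hφ v₂)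
    have hconst : ∀ a b, rootedOrbitRel D (Sum.inl r) a b → f a = f b := by
      rintro a b ⟨φ, hφ, rfl⟩
      have hK := hnoswap φ hφ
      rcases a with x | x | z
      · obtain ⟨ψ, hψr, hψ⟩ := ext1 φ hφ
        rw [hψ x]
        exact congrArg Sum.inl (Quot.sound ⟨ψ, hψr, rfl⟩)
      · obtain ⟨ψ, hψv, hψ⟩ := ext2 φ hφ hK.2.1
        rw [hψ x]
        exact congrArg Sum.inr (Quot.sound ⟨ψ, hψv, rfl⟩)
      · obtain ⟨z', hz'⟩ := hK.2.2 z
        rw [hz']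
    refine ⟨Quot.lift f hconst, ?_⟩
    rintro (q | q)
    · obtain ⟨x, rfl⟩ := Quot.exists_rep q
      exact ⟨Quot.mk _ (.inl x), rfl⟩
    · obtain ⟨y, rfl⟩ := Quot.exists_rep q
      exact ⟨Quot.mk _ (.inr (.inl y)), rfl⟩

end counting

theorem delta_rooted_orbits {V : Type} (k : ℕ) (G : SimpleGraph V)
    (hG : InDelta k G) (v : V) :
    2 ^ (k + 1) ≤ Nat.card (Quot (rootedOrbitRel G v)) := by
  induction hG with
  | base G e =>
    obtain ⟨e⟩ := e
    rw [Nat.card_congr (rootedOrbitRel_congr e v)]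
    haveI : Finite (Quot (rootedOrbitRel (⊤ : SimpleGraph (Fin 2)) (e v))) := quot_finite _
    have hne : Quot.mk (rootedOrbitRel (⊤ : SimpleGraph (Fin 2)) (e v)) (e v) ≠
        Quot.mk (rootedOrbitRel (⊤ : SimpleGraph (Fin 2)) (e v)) (e v + 1) := by
      rw [Ne, rootedOrbitRel_mk_eq]
      rintro ⟨φ, hv, hx⟩
      rw [hv] at hx
      have hww : (e v : Fin 2) ≠ e v + 1 := by
        generalize (e v : Fin 2) = w
        fin_cases w <;> decide
      exact hww hx
    have : Nontrivial (Quot (rootedOrbitRel (⊤ : SimpleGraph (Fin 2)) (e v))) := ⟨_, _, hne⟩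
    have h1 : 1 < Nat.card (Quot (rootedOrbitRel (⊤ : SimpleGraph (Fin 2)) (e v))) := Finite.one_lt_card_iff_nontrivial.mpr this
    calc 2 ^ (0 + 1) = 2 := by norm_num
    _ ≤ _ := h1
  | comp G v₁ v₂ v₃ h₁ h₂ h₃ e ih₁ ih₂ ih₃ =>
    rename_i k V₁ V₂ V₃ W G₁ G₂ G₃
    obtain ⟨e⟩ := e
    haveI := inDelta_finite h₁
    haveI := inDelta_finite h₂
    haveI := inDelta_finite h₃
    have c₁ := inDelta_card h₁
    have c₂ := inDelta_card h₂
    have c₃ := inDelta_card h₃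
    have g₁ := inDelta_connected h₁
    have g₂ := inDelta_connected h₂
    have g₃ := inDelta_connected h₃
    rw [Nat.card_congr (rootedOrbitRel_congr e v)]
    rcases hev : e v with r | r | r
    · calc 2 ^ (k + 1 + 1) = 2 * 2 ^ (k + 1) := by ring
      _ ≤ _ := count_step g₁ g₂ g₃ c₁ c₂ c₃ r (ih₁ r) (ih₂ v₂)
    · rw [Nat.card_congr (rootedOrbitRel_congr deltaRot (Sum.inr (Sum.inl r)))]
      have hroot : (deltaRot (G₁ := G₁) (G₂ := G₂) (G₃ := G₃) (v₁ := v₁) (v₂ := v₂) (v₃ := v₃))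
          (Sum.inr (Sum.inl r)) = Sum.inl r := rfl
      rw [hroot]
      calc 2 ^ (k + 1 + 1) = 2 * 2 ^ (k + 1) := by ring
      _ ≤ _ := count_step g₂ g₃ g₁ c₂ c₃ c₁ r (ih₂ r) (ih₃ v₃)
    · rw [Nat.card_congr (rootedOrbitRel_congr deltaRot (Sum.inr (Sum.inr r)))]
      have hroot : (deltaRot (G₁ := G₁) (G₂ := G₂) (G₃ := G₃) (v₁ := v₁) (v₂ := v₂) (v₃ := v₃))
          (Sum.inr (Sum.inr r)) = Sum.inr (Sum.inl r) := rfl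
      rw [hroot]
      rw [Nat.card_congr (rootedOrbitRel_congr deltaRot (Sum.inr (Sum.inl r)))]
      have hroot2 : (deltaRot (G₁ := G₂) (G₂ := G₃) (G₃ := G₁) (v₁ := v₂) (v₂ := v₃) (v₃ := v₁))
          (Sum.inr (Sum.inl r)) = Sum.inl r := rfl
      rw [hroot2]
      calc 2 ^ (k + 1 + 1) = 2 * 2 ^ (k + 1) := by ring
      _ ≤ _ := count_step g₃ g₁ g₂ c₃ c₁ c₂ r (ih₃ r) (ih₁ v₁)
end
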